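/- arXiv:1406.4634 — 6 statements merged into one kernel-verified Lean document; each statement's English description precedes it below -/
import Mathlib

section
/- Let f be a nonzero algebraic power series over a field k in variables x₁,…,xₙ, with minimal polynomial P(x,T) = a_d(x)T^d + ⋯ + a_0(x) ∈ k[x][T]. Then the (x)-adic order of f is at most the height of f, i.e., ord(f) ≤ max_i deg(a_i). -/
open Polynomial MvPowerSeries

noncomputable section

variable {k : Type*} [Field k] {σ : Type*}

/-- Evaluation of a polynomial `P ∈ k[x][T]` at a power series `f ∈ k⟦x⟧`. -/
def pEval (P : Polynomial (MvPolynomial σ k)) (f : MvPowerSeries σ k) :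
    MvPowerSeries σ k :=
  (P.map MvPolynomial.coeToMvPowerSeries.ringHom).eval f

/-- `P` is (a) minimal polynomial of the power series `f`:
it is nonzero, annihilates `f`, and generates the ideal of annihilators of `f`. -/
def IsMinPolyOf (P : Polynomial (MvPolynomial σ k)) (f : MvPowerSeries σ k) : Prop :=
  P ≠ 0 ∧ pEval P f = 0 ∧ ∀ Q : Polynomial (MvPolynomial σ k), pEval Q f = 0 → P ∣ Q

/-- The height of `P ∈ k[x][T]`: the maximum of the total degrees of its coefficients. -/
def heightP (P : Polynomial (MvPolynomial σ k)) : ℕ :=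
  (Finset.range (P.natDegree + 1)).sup fun i => (P.coeff i).totalDegree

/-- The constant coefficient (in `T`) of a minimal polynomial of `f ≠ 0` is nonzero. -/
theorem coeff_zero_ne_zero_of_isMinPolyOf {n : ℕ} (f : MvPowerSeries (Fin n) k) (hf : f ≠ 0)
    (P : Polynomial (MvPolynomial (Fin n) k)) (hP : IsMinPolyOf P f) : P.coeff 0 ≠ 0 := by
  obtain ⟨hPne, hPf, hmin⟩ := hP
  intro h0
  have hfac : P = Polynomial.X * P.divX := by
    conv_lhs => rw [← Polynomial.X_mul_divX_add P, h0, map_zero, add_zero]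
  have hQne : P.divX ≠ 0 := by
    intro h; rw [h, mul_zero] at hfac; exact hPne hfac
  have heval : pEval P f = f * pEval P.divX f := by
    conv_lhs => rw [pEval, hfac, Polynomial.map_mul, Polynomial.map_X, eval_mul, eval_X]
    rfl
  have hQf : pEval P.divX f = 0 := by
    rw [heval] at hPf
    rcases mul_eq_zero.mp hPf with h | h
    · exact absurd h hf
    · exact h
  have hdvd := hmin _ hQf
  have hle := Polynomial.natDegree_le_of_dvd hdvd hQne
  have : P.natDegree = 1 + P.divX.natDegree := by
    conv_lhs => rw [hfac]
    rw [Polynomial.natDegree_mul Polynomial.X_ne_zero hQne, Polynomial.natDegree_X]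
  omega

/-- If all coefficients of `f` of total degree `≤ H` vanish, then so do those of `g * f`. -/
theorem coeff_mul_right_eq_zero {g f : MvPowerSeries (Fin n) k} {H : ℕ}
    (hv : ∀ d : Fin n →₀ ℕ, (d.sum fun _ m => m) ≤ H → MvPowerSeries.coeff d f = 0)
    (d : Fin n →₀ ℕ) (hd : (d.sum fun _ m => m) ≤ H) :
    MvPowerSeries.coeff d (g * f) = 0 := by
  rw [MvPowerSeries.coeff_mul]
  refine Finset.sum_eq_zero fun p hp => ?_
  rw [Finset.HasAntidiagonal.mem_antidiagonal] at hp
  have hsum : (p.1.sum fun _ m => m) + (p.2.sum fun _ m => m) = d.sum fun _ m => m := by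
    rw [← hp, Finsupp.sum_add_index' (fun _ => rfl) (fun _ _ _ => rfl)]
  rw [hv p.2 (by omega), mul_zero]

/-- If `f` is a nonzero algebraic power series with minimal polynomial `P`,
then `ord(f) ≤ H(f)`: there is an exponent `d` of total degree at most `H(f)` whose
coefficient in `f` is nonzero. -/
theorem ord_le_height {n : ℕ} (f : MvPowerSeries (Fin n) k) (hf : f ≠ 0)
    (P : Polynomial (MvPolynomial (Fin n) k)) (hP : IsMinPolyOf P f) :
    ∃ d : Fin n →₀ ℕ, MvPowerSeries.coeff d f ≠ 0 ∧ (d.sum fun _ m => m) ≤ heightP P := by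
  by_contra hcon
  push_neg at hcon
  have hv : ∀ d : Fin n →₀ ℕ, (d.sum fun _ m => m) ≤ heightP P →
      MvPowerSeries.coeff d f = 0 := by
    intro d hd
    by_contra hne
    exact absurd hd (Nat.not_le.mpr (hcon d hne))
  have ha0 := coeff_zero_ne_zero_of_isMinPolyOf f hf P hP
  -- total degree of a₀ is at most heightP P
  have hdeg0 : (P.coeff 0).totalDegree ≤ heightP P :=
    Finset.le_sup (f := fun i => (P.coeff i).totalDegree)
      (Finset.mem_range.mpr (Nat.succ_pos _))
  apply ha0
  ext d
  rw [MvPolynomial.coeff_zero]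
  by_cases hd : (d.sum fun _ m => m) ≤ heightP P
  · -- use P(f) = 0
    have hPf := hP.2.1
    rw [pEval, eval_eq_sum_range'
      (n := P.natDegree + 1) (Nat.lt_succ_of_le Polynomial.natDegree_map_le)] at hPf
    have := congrArg (MvPowerSeries.coeff d) hPf
    rw [map_sum, map_zero] at this
    have hz : ∀ i ∈ Finset.range (P.natDegree + 1), i ≠ 0 →
        MvPowerSeries.coeff d
          ((P.map MvPolynomial.coeToMvPowerSeries.ringHom).coeff i * f ^ i) = 0 := by
      intro i _ hi
      obtain ⟨j, rfl⟩ := Nat.exists_eq_succ_of_ne_zero hi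
      rw [pow_succ, ← mul_assoc]
      exact coeff_mul_right_eq_zero hv d hd
    rw [Finset.sum_eq_single 0 hz (by simp)] at this
    simpa [Polynomial.coeff_map, MvPolynomial.coeff_coe] using this
  · -- d has degree > heightP P ≥ totalDegree (P.coeff 0), so its coefficient vanishes
    by_contra hne
    have := MvPolynomial.le_totalDegree (Finsupp.mem_support_iff.mpr hne)
    exact hd (le_trans this hdeg0)
end
end

section
/- Let α₁ be algebraic over k(x) with minimal polynomial P(x,T) of degree Deg(α₁) in T and height H(α₁), and let a₁ ∈ k(x) be a rational function of height H(a₁). Then H(a₁ + α₁) ≤ H(α₁) + Deg(α₁)·H(a₁). -/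
open Polynomial

noncomputable section

variable {k : Type*} [Field k] {σ : Type*}

/-- `P ∈ k[x][T]` is (a) minimal polynomial of the element `α` of a field extension `L`
of `k(x)`: it is nonzero, annihilates `α`, and generates the ideal of annihilators. -/
def IsMinPolyE {L : Type*} [Field L] [Algebra (MvPolynomial σ k) L]
    (P : Polynomial (MvPolynomial σ k)) (α : L) : Prop :=
  P ≠ 0 ∧ Polynomial.aeval α P = 0 ∧
    ∀ Q : Polynomial (MvPolynomial σ k), Polynomial.aeval α Q = 0 → P ∣ Q

namespace HeightAux

set_option linter.unusedSectionVars false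

variable {R : Type*} [CommRing R] [IsDomain R]

/-- The "homogenized shift" `∑_j F_j c^(e-j) (cX - s)^j`. -/
def psi (s c : R) (e : ℕ) (F : R[X]) : R[X] :=
  ∑ j ∈ Finset.range (e+1), C (F.coeff j * c^(e-j)) * (C c * X - C s)^j

section Map

variable {K : Type*} [Field K] (f : R →+* K)

def vmap (s c : R) : K[X] := C (f c)⁻¹ * (C (f c) * X - C (f s))

theorem map_psi {c : R} (hc : f c ≠ 0) {F : R[X]} {e : ℕ} (he : F.natDegree ≤ e) (s : R) :
    (psi s c e F).map f = C (f c ^ e) * (F.map f).comp (vmap f s c) := by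
  have h1 : (F.map f).comp (vmap f s c)
      = ∑ j ∈ Finset.range (e+1), C ((F.map f).coeff j) * (vmap f s c)^j := by
    rw [Polynomial.comp, Polynomial.eval₂_eq_sum_range' (C : K →+* K[X])
      (lt_of_le_of_lt (natDegree_map_le (f:=f) (p:=F)) (Nat.lt_succ_of_le he))]
  rw [h1, Finset.mul_sum, psi, Polynomial.map_sum]
  refine Finset.sum_congr rfl fun j hj => ?_
  have hj' : j ≤ e := Nat.lt_succ_iff.mp (Finset.mem_range.mp hj)
  rw [coeff_map, vmap, mul_pow, ← C_pow, Polynomial.map_mul, map_C, Polynomial.map_pow,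
    Polynomial.map_sub, Polynomial.map_mul, map_C, map_C, map_X]
  rw [map_mul, map_pow, C_mul, C_pow]
  rw [inv_pow, ← C_pow, pow_sub₀ _ hc hj', C_mul]
  ring

end Map

theorem natDegree_psi_le (s c : R) (e : ℕ) (F : R[X]) : (psi s c e F).natDegree ≤ e := by
  refine natDegree_sum_le_of_forall_le _ _ fun j hj => ?_
  have hj' : j ≤ e := Nat.lt_succ_iff.mp (Finset.mem_range.mp hj)
  refine (natDegree_mul_le).trans ?_
  rw [natDegree_C, zero_add]
  refine (natDegree_pow_le).trans ?_
  have h1 : (C c * X - C s).natDegree ≤ 1 := by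
    rw [sub_eq_add_neg, ← C_neg]
    exact natDegree_linear_le
  calc j * (C c * X - C s).natDegree ≤ j * 1 := Nat.mul_le_mul_left _ h1
    _ ≤ e := by omega

/-- fraction-field of R -/
abbrev FF (R : Type*) [CommRing R] [IsDomain R] : Type _ := FractionRing R

theorem psi_mul {s c : R} (hc : c ≠ 0) {F₁ F₂ : R[X]} {e₁ e₂ : ℕ}
    (h₁ : F₁.natDegree ≤ e₁) (h₂ : F₂.natDegree ≤ e₂) :
    psi s c (e₁ + e₂) (F₁ * F₂) = psi s c e₁ F₁ * psi s c e₂ F₂ := by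
  set f : R →+* FF R := algebraMap R (FF R) with hf
  have hfi : Function.Injective f := IsFractionRing.injective R (FF R)
  have hfc : f c ≠ 0 := fun h => hc (hfi (by simpa using h))
  apply Polynomial.map_injective f hfi
  rw [Polynomial.map_mul, map_psi f hfc (natDegree_mul_le.trans (add_le_add h₁ h₂)) s,
    map_psi f hfc h₁ s, map_psi f hfc h₂ s, Polynomial.map_mul, mul_comp, pow_add, C_mul]
  ring

theorem psi_psi {b c : R} (hc : c ≠ 0) {F : R[X]} {e : ℕ} (he : F.natDegree ≤ e) :
    psi b c e (psi (-b) c e F) = C (c ^ (2 * e)) * F := by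
  set f : R →+* FF R := algebraMap R (FF R) with hf
  have hfi : Function.Injective f := IsFractionRing.injective R (FF R)
  have hfc : f c ≠ 0 := fun h => hc (hfi (by simpa using h))
  apply Polynomial.map_injective f hfi
  rw [map_psi f hfc (natDegree_psi_le (-b) c e F) b, map_psi f hfc he (-b),
    Polynomial.map_mul, map_C, map_pow]
  simp only [mul_comp, pow_comp, C_comp, comp_assoc]
  have hv : (vmap f (-b) c).comp (vmap f b c) = X := by
    rw [vmap, vmap, mul_comp, C_comp, sub_comp, mul_comp, C_comp, X_comp, C_comp, map_neg,
      ← mul_assoc (C (f c)), ← C_mul, mul_inv_cancel₀ hfc, C_1, one_mul, C_neg,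
      sub_neg_eq_add, sub_add_cancel, ← mul_assoc, ← C_mul, inv_mul_cancel₀ hfc, C_1, one_mul]
  rw [hv, comp_X, map_pow]
  ring_nf
  rw [C_pow, mul_comm]

theorem psi_ne_zero_natDegree {s c : R} (hc : c ≠ 0) {F : R[X]} (hF : F ≠ 0) :
    psi s c F.natDegree F ≠ 0 ∧ (psi s c F.natDegree F).natDegree = F.natDegree := by
  set f : R →+* FF R := algebraMap R (FF R) with hf
  have hfi : Function.Injective f := IsFractionRing.injective R (FF R)
  have hfc : f c ≠ 0 := fun h => hc (hfi (by simpa using h))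
  have hmap := map_psi f hfc (le_refl F.natDegree) s
  have hFm : F.map f ≠ 0 := fun h => hF (Polynomial.map_injective f hfi (by simpa using h))
  have hvdeg : (vmap f s c : (FF R)[X]).natDegree = 1 := by
    rw [vmap, natDegree_C_mul (inv_ne_zero hfc), sub_eq_add_neg, ← C_neg]
    exact natDegree_linear hfc
  have hcomp : ((F.map f).comp (vmap f s c)).natDegree = F.natDegree := by
    rw [natDegree_comp, hvdeg, mul_one, natDegree_map_eq_of_injective hfi]
  have hv0 : (vmap f s c : (FF R)[X]) ≠ 0 := by
    intro h; rw [h, natDegree_zero] at hvdeg; exact one_ne_zero hvdeg.symm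
  have h9 := coeff_comp_degree_mul_degree (p := F.map f) (q := vmap f s c)
    (by rw [hvdeg]; exact one_ne_zero)
  have h9' : (F.map f).leadingCoeff * (vmap f s c).leadingCoeff ^ (F.map f).natDegree ≠ 0 :=
    mul_ne_zero (leadingCoeff_ne_zero.mpr hFm) (pow_ne_zero _ (leadingCoeff_ne_zero.mpr hv0))
  have hcompne : (F.map f).comp (vmap f s c) ≠ 0 := by
    intro h; rw [h, coeff_zero] at h9; exact h9' h9.symm
  have hne : (psi s c F.natDegree F).map f ≠ 0 := by
    rw [hmap]
    exact mul_ne_zero (by simpa using pow_ne_zero _ hfc) hcompne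
  constructor
  · intro h; rw [h, Polynomial.map_zero] at hne; exact hne rfl
  · have := congrArg natDegree hmap
    rw [natDegree_map_eq_of_injective hfi] at this
    rw [this, natDegree_C_mul (pow_ne_zero _ hfc), hcomp]

theorem aeval_psi {L : Type*} [CommRing L] [Algebra R L] {s c : R} {β y : L} {F : R[X]} {e : ℕ}
    (he : F.natDegree ≤ e)
    (hy : algebraMap R L c * β - algebraMap R L s = algebraMap R L c * y) :
    Polynomial.aeval β (psi s c e F) = (algebraMap R L c)^e * Polynomial.aeval y F := by
  have hav : Polynomial.aeval y F
      = ∑ j ∈ Finset.range (e+1), algebraMap R L (F.coeff j) * y ^ j := by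
    rw [aeval_eq_sum_range' (Nat.lt_succ_of_le he)]
    simp_rw [Algebra.smul_def]
  rw [psi, map_sum, hav, Finset.mul_sum]
  refine Finset.sum_congr rfl fun j hj => ?_
  have hj' : j ≤ e := Nat.lt_succ_iff.mp (Finset.mem_range.mp hj)
  simp only [map_mul, map_pow, map_sub, aeval_C, aeval_X]
  rw [hy, mul_pow]
  rw [show (algebraMap R L) (F.coeff j) * (algebraMap R L c) ^ (e-j) *
      ((algebraMap R L c) ^ j * y ^ j)
    = (algebraMap R L) (F.coeff j) * ((algebraMap R L c) ^ (e-j) * (algebraMap R L c) ^ j)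
      * y ^ j by ring, pow_sub_mul_pow _ hj']
  ring

theorem primitive_dvd_of_dvd_C_mul {R : Type*} [CommRing R] [IsDomain R]
    [StrongNormalizedGCDMonoid R] {q F : R[X]} {r : R}
    (hq : q.IsPrimitive) (hr : r ≠ 0) (h : q ∣ C r * F) : q ∣ F := by
  rcases eq_or_ne F 0 with rfl | hF
  · exact dvd_zero q
  obtain ⟨M, hM⟩ := h
  have h3 := congrArg content hM
  rw [content_C_mul, content_mul, hq.content_eq_one, one_mul] at h3
  have h2 : C r * F = C r * (C ((normUnit r : Rˣ) : R) * C F.content * (q * M.primPart)) := by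
    calc C r * F = q * M := hM
      _ = q * (C M.content * M.primPart) := by rw [← eq_C_content_mul_primPart]
      _ = q * (C (normalize r * F.content) * M.primPart) := by rw [← h3]
      _ = _ := by rw [normalize_apply, C_mul, C_mul]; ring
  have h4 := mul_left_cancel₀ (show (C r : R[X]) ≠ 0 by simpa using hr) h2
  rw [h4]
  exact Dvd.dvd.mul_left (dvd_mul_right q M.primPart) _

section Theta

variable {A : Type*} [CommRing A] [IsDomain A] {σ : Type*}

/-- homogenizing embedding of `MvPolynomial σ A` into `(MvPolynomial σ A)[X]`. -/
def theta : MvPolynomial σ A →+* Polynomial (MvPolynomial σ A) :=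
  MvPolynomial.eval₂Hom (Polynomial.C.comp MvPolynomial.C)
    (fun i => Polynomial.C (MvPolynomial.X i) * Polynomial.X)

theorem theta_monomial (m : σ →₀ ℕ) (a : A) :
    theta (MvPolynomial.monomial m a)
      = Polynomial.C (MvPolynomial.monomial m a) * Polynomial.X ^ (m.sum fun _ e => e) := by
  rw [theta, MvPolynomial.eval₂Hom_monomial]
  have h1 : (m.prod fun i e => (Polynomial.C (MvPolynomial.X i) * Polynomial.X) ^ e :
        Polynomial (MvPolynomial σ A))
      = Polynomial.C (m.prod fun i e => (MvPolynomial.X i) ^ e)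
        * Polynomial.X ^ (m.sum fun _ e => e) := by
    rw [Finsupp.prod, Finsupp.prod, Finsupp.sum]
    simp_rw [mul_pow, ← Polynomial.C_pow]
    rw [Finset.prod_mul_distrib, ← map_prod, Finset.prod_pow_eq_pow_sum]
  rw [h1, MvPolynomial.monomial_eq, map_mul, RingHom.comp_apply]
  ring

theorem theta_natDegree {p : MvPolynomial σ A} (hp : p ≠ 0) :
    theta p ≠ 0 ∧ (theta p).natDegree = p.totalDegree := by
  classical
  have happ : theta p = ∑ m ∈ p.support,
      Polynomial.C (MvPolynomial.monomial m (MvPolynomial.coeff m p))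
        * Polynomial.X ^ (m.sum fun _ e => e) := by
    conv_lhs => rw [p.as_sum]
    rw [map_sum]
    exact Finset.sum_congr rfl fun m _ => theta_monomial m _
  obtain ⟨m₀, hm₀, hd⟩ := Finset.exists_mem_eq_sup p.support
    (MvPolynomial.support_nonempty.mpr hp) (fun s => s.sum fun _ e => e)
  have hdd : p.totalDegree = m₀.sum fun _ e => e := hd
  have hsum : (theta p).coeff p.totalDegree
      = ∑ m ∈ p.support, if p.totalDegree = m.sum fun _ e => e
          then MvPolynomial.monomial m (MvPolynomial.coeff m p) else 0 := by
    rw [happ, finset_sum_coeff]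
    simp_rw [coeff_C_mul, coeff_X_pow, mul_ite, mul_one, mul_zero]
  have hc2 : MvPolynomial.coeff m₀ ((theta p).coeff p.totalDegree)
      = MvPolynomial.coeff m₀ p := by
    rw [hsum, MvPolynomial.coeff_sum, Finset.sum_eq_single m₀]
    · rw [if_pos hdd, MvPolynomial.coeff_monomial, if_pos rfl]
    · intro m hm hne
      split_ifs with h1
      · rw [MvPolynomial.coeff_monomial, if_neg hne]
      · exact MvPolynomial.coeff_zero _
    · intro h; exact absurd hm₀ h
  have hcoeff : (theta p).coeff p.totalDegree ≠ 0 := by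
    intro hzero
    exact (MvPolynomial.mem_support_iff.mp hm₀) (by rw [← hc2, hzero]; simp)
  refine ⟨fun h => hcoeff (by rw [h, coeff_zero]), le_antisymm ?_ (le_natDegree_of_ne_zero hcoeff)⟩
  rw [happ]
  refine natDegree_sum_le_of_forall_le _ _ fun m hm => ?_
  refine natDegree_mul_le.trans ?_
  rw [natDegree_C, zero_add]
  exact (natDegree_X_pow_le _).trans (MvPolynomial.le_totalDegree hm)

theorem totalDegree_mul_eq {p q : MvPolynomial σ A} (hp : p ≠ 0) (hq : q ≠ 0) :
    (p * q).totalDegree = p.totalDegree + q.totalDegree := by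
  obtain ⟨hp0, hpd⟩ := theta_natDegree (σ := σ) hp
  obtain ⟨hq0, hqd⟩ := theta_natDegree (σ := σ) hq
  obtain ⟨hpq0, hpqd⟩ := theta_natDegree (σ := σ) (mul_ne_zero hp hq)
  rw [← hpqd, map_mul, natDegree_mul hp0 hq0, hpd, hqd]

theorem totalDegree_le_of_dvd {p w : MvPolynomial σ A} (h : p ∣ w) (hw : w ≠ 0) :
    p.totalDegree ≤ w.totalDegree := by
  obtain ⟨t, rfl⟩ := h
  have hp : p ≠ 0 := fun h => hw (by rw [h, zero_mul])
  have ht : t ≠ 0 := fun h => hw (by rw [h, mul_zero])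
  rw [totalDegree_mul_eq hp ht]
  exact Nat.le_add_right _ _

end Theta

section Height

variable {k : Type*} [Field k] {σ : Type*}

theorem coeff_linpow_totalDegree_le (s c : MvPolynomial σ k) {m : ℕ}
    (hs : s.totalDegree ≤ m) (hc : c.totalDegree ≤ m) (j i : ℕ) :
    ((((C c * X - C s : Polynomial (MvPolynomial σ k)))^j).coeff i).totalDegree ≤ j * m := by
  have hw : ∀ n, (((C c * X - C s : Polynomial (MvPolynomial σ k)).coeff n)).totalDegree ≤ m := by
    intro n
    rcases n with _ | n
    · rw [coeff_sub, coeff_C_mul, coeff_X_zero, mul_zero, coeff_C, if_pos rfl, zero_sub,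
        MvPolynomial.totalDegree_neg]
      exact hs
    · rcases n with _ | n
      · rw [coeff_sub, coeff_C_mul, coeff_X_one, mul_one, coeff_C, if_neg (by omega), sub_zero]
        exact hc
      · rw [coeff_sub, coeff_C_mul, coeff_X, if_neg (by omega), mul_zero, coeff_C,
          if_neg (by omega), sub_zero]
        simp
  induction j generalizing i with
  | zero =>
    rw [pow_zero, coeff_one]
    split_ifs <;> simp
  | succ j ih =>
    rw [pow_succ, coeff_mul]
    refine (MvPolynomial.totalDegree_finset_sum _ _).trans (Finset.sup_le fun x hx => ?_)
    refine (MvPolynomial.totalDegree_mul _ _).trans ?_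
    refine (add_le_add (ih x.1) (hw x.2)).trans ?_
    rw [Nat.succ_mul]

theorem coeff_psi_totalDegree_le {s c : MvPolynomial σ k} {P : Polynomial (MvPolynomial σ k)}
    {hp d m : ℕ} (hP : ∀ j, ((P.coeff j).totalDegree) ≤ hp)
    (hs : s.totalDegree ≤ m) (hc : c.totalDegree ≤ m) (i : ℕ) :
    (((psi s c d P).coeff i)).totalDegree ≤ hp + d * m := by
  rw [psi, finset_sum_coeff]
  simp_rw [coeff_C_mul]
  refine (MvPolynomial.totalDegree_finset_sum _ _).trans (Finset.sup_le fun j hj => ?_)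
  have hj' : j ≤ d := Nat.lt_succ_iff.mp (Finset.mem_range.mp hj)
  refine (MvPolynomial.totalDegree_mul _ _).trans ?_
  have h1 : ((P.coeff j * c ^ (d - j)).totalDegree) ≤ hp + (d - j) * m :=
    (MvPolynomial.totalDegree_mul _ _).trans (add_le_add (hP j)
      ((MvPolynomial.totalDegree_pow _ _).trans (Nat.mul_le_mul_left _ hc)))
  refine (add_le_add h1 (coeff_linpow_totalDegree_le s c hs hc j i)).trans ?_
  have : (d - j) * m + j * m = d * m := by
    rw [← Nat.add_mul, Nat.sub_add_cancel hj']
  omega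

theorem coeff_totalDegree_le_heightP (P : Polynomial (MvPolynomial σ k)) (j : ℕ) :
    ((P.coeff j).totalDegree) ≤ heightP P := by
  rw [heightP]
  by_cases h : j ≤ P.natDegree
  · refine Finset.le_sup (f := fun i => (P.coeff i).totalDegree) ?_
    exact Finset.mem_range.mpr (by omega)
  · rw [coeff_eq_zero_of_natDegree_lt (not_le.mp h)]
    simp

theorem heightP_le {P : Polynomial (MvPolynomial σ k)} {B : ℕ}
    (h : ∀ i, ((P.coeff i).totalDegree) ≤ B) : heightP P ≤ B := by
  rw [heightP]
  exact Finset.sup_le fun i _ => h i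

end Height

end HeightAux

/-- If `α₁` is algebraic over `k(x)` with minimal polynomial `P`, and
`a₁ = b/c ∈ k(x)` is a rational function written in lowest terms, then
`H(a₁ + α₁) ≤ H(α₁) + Deg(α₁) · H(a₁)`, where `H(a₁) = max (deg b) (deg c)`. -/
theorem height_add_rational_le {n : ℕ} {L : Type*} [Field L]
    [Algebra (MvPolynomial (Fin n) k) L]
    (hinj : Function.Injective (algebraMap (MvPolynomial (Fin n) k) L))
    (α₁ : L) (P : Polynomial (MvPolynomial (Fin n) k)) (hP : IsMinPolyE P α₁)
    (a₁ : L) (b c : MvPolynomial (Fin n) k) (hc : c ≠ 0) (hbc : IsRelPrime b c)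
    (ha₁ : a₁ * algebraMap (MvPolynomial (Fin n) k) L c =
      algebraMap (MvPolynomial (Fin n) k) L b) :
    ∃ Q : Polynomial (MvPolynomial (Fin n) k), IsMinPolyE Q (a₁ + α₁) ∧
      heightP Q ≤ heightP P + P.natDegree * max b.totalDegree c.totalDegree := by
  classical
  letI : StrongNormalizationMonoid (MvPolynomial (Fin n) k) :=
    UniqueFactorizationMonoid.normalizationMonoid
  letI : StrongNormalizedGCDMonoid (MvPolynomial (Fin n) k) :=
    UniqueFactorizationMonoid.toStrongNormalizedGCDMonoid _
  haveI : Module.IsTorsionFree (MvPolynomial (Fin n) k) L :=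
    by rw [Module.isTorsionFree_iff_algebraMap_injective]; exact hinj
  obtain ⟨hP0, hPa, hPdvd⟩ := hP
  set f := algebraMap (MvPolynomial (Fin n) k) L with hfdef
  set β := a₁ + α₁ with hβ
  have key : f c * β - f b = f c * α₁ := by
    rw [hβ]; linear_combination ha₁
  set Q₀ := HeightAux.psi b c P.natDegree P with hQ₀def
  obtain ⟨hQ₀0, hQ₀d⟩ := HeightAux.psi_ne_zero_natDegree (s := b) hc hP0
  have hQ₀a : Polynomial.aeval β Q₀ = 0 := by
    rw [hQ₀def, HeightAux.aeval_psi le_rfl key, hPa, mul_zero]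
  refine ⟨Q₀.primPart, ⟨Q₀.primPart_ne_zero, Polynomial.aeval_primPart_eq_zero hQ₀0 hQ₀a, ?_⟩, ?_⟩
  · -- divisibility
    intro F hF
    rcases eq_or_ne F 0 with rfl | hF0
    · exact dvd_zero _
    have keyG : f c * α₁ - f (-b) = f c * β := by
      rw [map_neg, hβ]; linear_combination - ha₁
    have hGa : Polynomial.aeval α₁ (HeightAux.psi (-b) c F.natDegree F) = 0 := by
      rw [HeightAux.aeval_psi le_rfl keyG, hF, mul_zero]
    obtain ⟨H, hH⟩ := hPdvd _ hGa
    obtain ⟨hG0, hGd⟩ := HeightAux.psi_ne_zero_natDegree (s := -b) hc hF0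
    have hH0 : H ≠ 0 := by rintro rfl; rw [mul_zero] at hH; exact hG0 hH
    have hdeg : P.natDegree + H.natDegree = F.natDegree := by
      rw [← Polynomial.natDegree_mul hP0 hH0, ← hH, hGd]
    have hsplit : HeightAux.psi b c F.natDegree (HeightAux.psi (-b) c F.natDegree F)
        = Q₀ * HeightAux.psi b c H.natDegree H := by
      rw [hH, ← hdeg, HeightAux.psi_mul hc le_rfl le_rfl, hQ₀def]
    have hPP := HeightAux.psi_psi (b := b) hc (le_refl F.natDegree)
    have hdvd0 : Q₀ ∣ Polynomial.C (c ^ (2 * F.natDegree)) * F :=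
      ⟨HeightAux.psi b c H.natDegree H, by rw [← hPP, hsplit]⟩
    exact HeightAux.primitive_dvd_of_dvd_C_mul (Q₀.isPrimitive_primPart)
      (pow_ne_zero _ hc) ((Q₀.primPart_dvd).trans hdvd0)
  · -- height bound
    have hcont : Q₀.content ≠ 0 := fun h => hQ₀0 (Polynomial.content_eq_zero_iff.mp h)
    refine HeightAux.heightP_le fun i => ?_
    have heq : Q₀.coeff i = Q₀.content * Q₀.primPart.coeff i := by
      conv_lhs => rw [Q₀.eq_C_content_mul_primPart]
      rw [Polynomial.coeff_C_mul]
    have hbound : ((Q₀.coeff i).totalDegree)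
        ≤ heightP P + P.natDegree * max b.totalDegree c.totalDegree :=
      HeightAux.coeff_psi_totalDegree_le (HeightAux.coeff_totalDegree_le_heightP P)
        (le_max_left _ _) (le_max_right _ _) i
    rcases eq_or_ne (Q₀.primPart.coeff i) 0 with h0 | h0
    · rw [h0]; simp
    have hQ₀c0 : Q₀.coeff i ≠ 0 := by
      rw [heq]; exact mul_ne_zero hcont h0
    exact (HeightAux.totalDegree_le_of_dvd ⟨Q₀.content, by rw [heq]; ring⟩ hQ₀c0).trans hbound
end
end

section
/- Let α₁ be algebraic over k(x) and a₁ ∈ k(x). Then H(a₁·α₁) ≤ H(α₁) + Deg(α₁)·H(a₁). -/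
open Polynomial

noncomputable section

variable {k : Type*} [Field k] {σ : Type*}

namespace HeightAux

variable {R : Type*} [CommRing R]

/-- The twist of a polynomial `f = ∑ fᵢ Tⁱ` by `u, v`:  `∑ fᵢ u^(e-i) v^i Tⁱ`. -/
def tw (u v : R) (e : ℕ) (f : R[X]) : R[X] :=
  ∑ i ∈ Finset.range (e+1), Polynomial.C (f.coeff i * u ^ (e - i) * v ^ i) * Polynomial.X ^ i

lemma coeff_tw (u v : R) (e : ℕ) (f : R[X]) (j : ℕ) :
    (tw u v e f).coeff j = if j ≤ e then f.coeff j * u ^ (e - j) * v ^ j else 0 := by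
  rw [tw, Polynomial.finset_sum_coeff]
  simp only [Polynomial.coeff_C_mul_X_pow]
  simp only [eq_comm (a := j)]
  rw [Finset.sum_ite_eq' (Finset.range (e+1)) j]
  simp [Nat.lt_succ_iff]

lemma coeff_tw_of_le {u v : R} {e : ℕ} {f : R[X]} {j : ℕ} (h : j ≤ e) :
    (tw u v e f).coeff j = f.coeff j * u ^ (e - j) * v ^ j := by
  rw [coeff_tw, if_pos h]

lemma coeff_tw_of_gt {u v : R} {e : ℕ} {f : R[X]} {j : ℕ} (h : e < j) :
    (tw u v e f).coeff j = 0 := by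
  rw [coeff_tw, if_neg (not_le.2 h)]

lemma tw_mul (u v : R) {d e : ℕ} {f g : R[X]} (hf : f.natDegree ≤ d) (hg : g.natDegree ≤ e) :
    tw u v d f * tw u v e g = tw u v (d+e) (f*g) := by
  ext j
  rw [Polynomial.coeff_mul, coeff_tw]
  by_cases hj : j ≤ d + e
  · rw [if_pos hj, Polynomial.coeff_mul, Finset.sum_mul, Finset.sum_mul]
    apply Finset.sum_congr rfl
    rintro ⟨i, i'⟩ hmem
    have hii' : i + i' = j := Finset.HasAntidiagonal.mem_antidiagonal.1 hmem
    rw [coeff_tw, coeff_tw]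
    by_cases hi : i ≤ d
    · by_cases hi' : i' ≤ e
      · rw [if_pos hi, if_pos hi']
        have hu : u ^ (d - i) * u ^ (e - i') = u ^ (d + e - j) := by
          rw [← pow_add]; congr 1; omega
        have hv : v ^ i * v ^ i' = v ^ j := by rw [← pow_add, hii']
        dsimp only
        calc f.coeff i * u ^ (d - i) * v ^ i * (g.coeff i' * u ^ (e - i') * v ^ i')
            = f.coeff i * g.coeff i' * (u ^ (d - i) * u ^ (e - i')) * (v ^ i * v ^ i') := by ring
          _ = f.coeff i * g.coeff i' * u ^ (d + e - j) * v ^ j := by rw [hu, hv]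
      · have : g.coeff i' = 0 := Polynomial.coeff_eq_zero_of_natDegree_lt (by omega)
        dsimp only
        rw [if_neg hi', this]; ring
    · have : f.coeff i = 0 := Polynomial.coeff_eq_zero_of_natDegree_lt (by omega)
      dsimp only
      rw [if_neg hi, this]; ring
  · rw [if_neg hj]
    apply Finset.sum_eq_zero
    rintro ⟨i, i'⟩ hmem
    have hii' : i + i' = j := Finset.HasAntidiagonal.mem_antidiagonal.1 hmem
    rw [coeff_tw, coeff_tw]
    by_cases hi : i ≤ d
    · have hi' : ¬ i' ≤ e := by omega
      rw [if_neg hi', mul_zero]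
    · rw [if_neg hi, zero_mul]

lemma tw_tw (u v : R) {e : ℕ} {f : R[X]} (hf : f.natDegree ≤ e) :
    tw u v e (tw v u e f) = Polynomial.C ((u*v)^e) * f := by
  ext j
  rw [coeff_tw, Polynomial.coeff_C_mul]
  by_cases hj : j ≤ e
  · rw [if_pos hj, coeff_tw_of_le hj, mul_pow]
    have hu : u ^ (e - j) * u ^ j = u ^ e := by rw [← pow_add]; congr 1; omega
    have hv : v ^ (e - j) * v ^ j = v ^ e := by rw [← pow_add]; congr 1; omega
    calc f.coeff j * v ^ (e - j) * u ^ j * u ^ (e - j) * v ^ j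
        = f.coeff j * (u ^ (e-j) * u ^ j) * (v ^ (e-j) * v ^ j) := by ring
      _ = u ^ e * v ^ e * f.coeff j := by rw [hu, hv]; ring
  · rw [if_neg hj]
    have : f.coeff j = 0 := Polynomial.coeff_eq_zero_of_natDegree_lt (by omega)
    rw [this, mul_zero]

lemma aeval_tw {L : Type*} [CommRing L] [Algebra R L] (u v : R) {e : ℕ} {f : R[X]}
    (hf : f.natDegree ≤ e) {β γ : L}
    (h : β * algebraMap R L v = γ * algebraMap R L u) :
    Polynomial.aeval β (tw u v e f) = (algebraMap R L u)^e * Polynomial.aeval γ f := by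
  rw [tw, map_sum, Polynomial.aeval_eq_sum_range' (Nat.lt_succ_of_le hf), Finset.mul_sum]
  apply Finset.sum_congr rfl
  intro i hi
  have hile : i ≤ e := Nat.lt_succ_iff.1 (Finset.mem_range.1 hi)
  rw [map_mul, map_pow, Polynomial.aeval_X, Polynomial.aeval_C, Algebra.smul_def]
  rw [map_mul, map_mul, map_pow, map_pow]
  have h2 : (algebraMap R L v)^i * β^i = (algebraMap R L u)^i * γ^i := by
    rw [← mul_pow, ← mul_pow, mul_comm _ β, h, mul_comm γ]
  calc algebraMap R L (f.coeff i) * (algebraMap R L u)^(e-i) * (algebraMap R L v)^i * β^i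
      = algebraMap R L (f.coeff i) * (algebraMap R L u)^(e-i) * ((algebraMap R L v)^i * β^i) := by ring
    _ = algebraMap R L (f.coeff i) * (algebraMap R L u)^(e-i) * ((algebraMap R L u)^i * γ^i) := by rw [h2]
    _ = (algebraMap R L u)^(e-i) * (algebraMap R L u)^i * (algebraMap R L (f.coeff i) * γ^i) := by ring
    _ = (algebraMap R L u)^e * (algebraMap R L (f.coeff i) * γ^i) := by
        rw [← pow_add]; congr 2; omega

lemma totalDegree_le_mul {σ R : Type*} [CommRing R] [IsDomain R]
    {f g : MvPolynomial σ R} (hf : f ≠ 0) (hg : g ≠ 0) :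
    f.totalDegree ≤ (f * g).totalDegree := by
  classical
  set a := f.totalDegree with ha
  set b := g.totalDegree with hb
  set F := MvPolynomial.homogeneousComponent a f with hF
  set G := MvPolynomial.homogeneousComponent b g with hG
  have hsum : ∀ u : σ →₀ ℕ, (u.sum fun _ e => e) = u.degree := by
    intro u; rw [Finsupp.degree]; rfl
  have hcoeffF : ∀ u : σ →₀ ℕ, MvPolynomial.coeff u F =
      if u.degree = a then MvPolynomial.coeff u f else 0 :=
    fun u => MvPolynomial.coeff_homogeneousComponent _ _ u
  have hcoeffG : ∀ u : σ →₀ ℕ, MvPolynomial.coeff u G =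
      if u.degree = b then MvPolynomial.coeff u g else 0 :=
    fun u => MvPolynomial.coeff_homogeneousComponent _ _ u
  have hFne : F ≠ 0 := by
    obtain ⟨d, hd, hds⟩ := Finset.exists_mem_eq_sup f.support
      (MvPolynomial.support_nonempty.2 hf) (fun s => s.sum fun _ e => e)
    intro h0
    have : MvPolynomial.coeff d F = MvPolynomial.coeff d f := by
      rw [hcoeffF, if_pos]; rw [← hsum d, ← hds]; rfl
    rw [h0] at this
    exact (MvPolynomial.mem_support_iff.1 hd) (by simpa using this.symm)
  have hGne : G ≠ 0 := by
    obtain ⟨d, hd, hds⟩ := Finset.exists_mem_eq_sup g.support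
      (MvPolynomial.support_nonempty.2 hg) (fun s => s.sum fun _ e => e)
    intro h0
    have : MvPolynomial.coeff d G = MvPolynomial.coeff d g := by
      rw [hcoeffG, if_pos]; rw [← hsum d, ← hds]; rfl
    rw [h0] at this
    exact (MvPolynomial.mem_support_iff.1 hd) (by simpa using this.symm)
  have key : ∀ d : σ →₀ ℕ, d.degree = a + b →
      MvPolynomial.coeff d (f * g) = MvPolynomial.coeff d (F * G) := by
    intro d hd
    rw [MvPolynomial.coeff_mul, MvPolynomial.coeff_mul]
    apply Finset.sum_congr rfl
    rintro ⟨u, v⟩ hmem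
    have huv : u + v = d := Finset.HasAntidiagonal.mem_antidiagonal.1 hmem
    dsimp only
    rw [hcoeffF, hcoeffG]
    have hdeg : u.degree + v.degree = a + b := by
      rw [← hd, ← huv]
      simp [Finsupp.degree_eq_weight_one, map_add]
    by_cases hu : u.degree = a
    · by_cases hv : v.degree = b
      · rw [if_pos hu, if_pos hv]
      · exfalso; omega
    · rw [if_neg hu, zero_mul]
      by_contra hne
      have hfu : MvPolynomial.coeff u f ≠ 0 := fun h => hne (by rw [h, zero_mul])
      have hgv : MvPolynomial.coeff v g ≠ 0 := fun h => hne (by rw [h, mul_zero])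
      have h1 : u.degree ≤ a := by
        rw [← hsum u]; exact MvPolynomial.le_totalDegree (MvPolynomial.mem_support_iff.2 hfu)
      have h2 : v.degree ≤ b := by
        rw [← hsum v]; exact MvPolynomial.le_totalDegree (MvPolynomial.mem_support_iff.2 hgv)
      omega
  have hFG : F * G ≠ 0 := mul_ne_zero hFne hGne
  obtain ⟨d, hd⟩ := MvPolynomial.ne_zero_iff.1 hFG
  have hhom : (F * G).IsHomogeneous (a + b) :=
    (MvPolynomial.homogeneousComponent_isHomogeneous a f).mul
      (MvPolynomial.homogeneousComponent_isHomogeneous b g)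
  have hdd : d.degree = a + b := by
    rw [Finsupp.degree_eq_weight_one]; exact hhom hd
  have hcd : MvPolynomial.coeff d (f * g) ≠ 0 := by rw [key d hdd]; exact hd
  have hle : d.degree ≤ (f * g).totalDegree := by
    rw [← hsum d]
    exact MvPolynomial.le_totalDegree (MvPolynomial.mem_support_iff.2 hcd)
  omega

lemma isPrimitive_dvd_of_dvd_C_mul {R : Type*} [CommRing R] [IsDomain R] [StrongNormalizedGCDMonoid R]
    {W S : R[X]} (hW : W.IsPrimitive) {a : R} (ha : a ≠ 0)
    (h : W ∣ Polynomial.C a * S) : W ∣ S := by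
  obtain ⟨T, hT⟩ := h
  have hcont : normalize a * S.content = T.content := by
    have h2 := congrArg Polynomial.content hT
    rwa [Polynomial.content_C_mul, Polynomial.content_mul, hW.content_eq_one, one_mul] at h2
  have hdvd : a ∣ T.content := by
    rw [← hcont]
    exact Dvd.dvd.mul_right (normalize_associated a).symm.dvd _
  obtain ⟨s, hs⟩ := hdvd
  obtain ⟨tp, hTeq⟩ : ∃ tp, T = Polynomial.C a * (Polynomial.C s * tp) := by
    refine ⟨T.primPart, ?_⟩
    conv_lhs => rw [T.eq_C_content_mul_primPart]
    rw [hs, map_mul, mul_assoc]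
  have hCane : (Polynomial.C a : R[X]) ≠ 0 := fun hh => ha (Polynomial.C_eq_zero.1 hh)
  have h3 : Polynomial.C a * S = Polynomial.C a * (W * (Polynomial.C s * tp)) := by
    rw [hT, hTeq]; ring
  exact ⟨_, mul_left_cancel₀ hCane h3⟩

end HeightAux

lemma heightP_le {P : Polynomial (MvPolynomial σ k)} {m : ℕ}
    (h : ∀ i, i ≤ P.natDegree → (P.coeff i).totalDegree ≤ m) : heightP P ≤ m :=
  Finset.sup_le fun i hi => h i (Nat.lt_succ_iff.1 (Finset.mem_range.1 hi))

lemma totalDegree_coeff_le_heightP (P : Polynomial (MvPolynomial σ k)) (i : ℕ) :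
    (P.coeff i).totalDegree ≤ heightP P := by
  by_cases hi : i ≤ P.natDegree
  · exact Finset.le_sup (f := fun i => (P.coeff i).totalDegree) (Finset.mem_range.2 (Nat.lt_succ_of_le hi))
  · rw [Polynomial.coeff_eq_zero_of_natDegree_lt (not_le.1 hi)]
    simp

/-- If `α₁` is algebraic over `k(x)` with minimal polynomial `P`, and
`a₁ = b/c ∈ k(x)` is a rational function written in lowest terms, then
`H(a₁ * α₁) ≤ H(α₁) + Deg(α₁) · H(a₁)`, where `H(a₁) = max (deg b) (deg c)`. -/
theorem height_mul_rational_le {n : ℕ} {L : Type*} [Field L]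
    [Algebra (MvPolynomial (Fin n) k) L]
    (hinj : Function.Injective (algebraMap (MvPolynomial (Fin n) k) L))
    (α₁ : L) (P : Polynomial (MvPolynomial (Fin n) k)) (hP : IsMinPolyE P α₁)
    (a₁ : L) (b c : MvPolynomial (Fin n) k) (hc : c ≠ 0) (hbc : IsRelPrime b c)
    (ha₁ : a₁ * algebraMap (MvPolynomial (Fin n) k) L c =
      algebraMap (MvPolynomial (Fin n) k) L b) :
    ∃ Q : Polynomial (MvPolynomial (Fin n) k), IsMinPolyE Q (a₁ * α₁) ∧
      heightP Q ≤ heightP P + P.natDegree * max b.totalDegree c.totalDegree := by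
  classical
  letI : StrongNormalizationMonoid (MvPolynomial (Fin n) k) :=
    UniqueFactorizationMonoid.strongNormalizationMonoid
  letI : StrongNormalizedGCDMonoid (MvPolynomial (Fin n) k) :=
    UniqueFactorizationMonoid.toStrongNormalizedGCDMonoid (MvPolynomial (Fin n) k)
  obtain ⟨hP0, hPa, hPmin⟩ := hP
  set d := P.natDegree with hd
  set M := max b.totalDegree c.totalDegree with hM
  have hcL : algebraMap (MvPolynomial (Fin n) k) L c ≠ 0 := fun h => hc (hinj (by rw [h, map_zero]))
  by_cases hb : b = 0
  · -- then a₁ = 0 and minimal polynomial of 0 is X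
    have ha0 : a₁ = 0 := by
      have h1 := ha₁
      rw [hb, map_zero] at h1
      exact (mul_eq_zero.1 h1).resolve_right hcL
    refine ⟨Polynomial.X, ⟨Polynomial.X_ne_zero, ?_, ?_⟩, ?_⟩
    · rw [ha0, zero_mul, Polynomial.aeval_X]
    · intro Q hQ
      rw [ha0, zero_mul] at hQ
      rw [Polynomial.X_dvd_iff]
      have h2 : algebraMap (MvPolynomial (Fin n) k) L (Q.coeff 0) = 0 := by
        rw [← hQ, Polynomial.aeval_def, Polynomial.eval₂_at_zero]
      exact hinj (by rw [h2, map_zero])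
    · refine le_trans (heightP_le ?_) (Nat.zero_le _)
      intro i hi
      rcases i with _ | _ | i <;> simp [Polynomial.coeff_X]
  · -- main case : b ≠ 0
    have hbL : algebraMap (MvPolynomial (Fin n) k) L b ≠ 0 := fun h => hb (hinj (by rw [h, map_zero]))
    have hPd : P.coeff d ≠ 0 := by
      rw [hd, ← Polynomial.leadingCoeff]
      exact Polynomial.leadingCoeff_ne_zero.2 hP0
    set Q₀ := HeightAux.tw b c d P with hQ₀def
    have hQ₀d : Q₀.coeff d = P.coeff d * c ^ d := by
      rw [hQ₀def, HeightAux.coeff_tw_of_le le_rfl, Nat.sub_self, pow_zero, mul_one]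
    have hQ₀dne : Q₀.coeff d ≠ 0 := by
      rw [hQ₀d]; exact mul_ne_zero hPd (pow_ne_zero _ hc)
    have hQ₀ne : Q₀ ≠ 0 := fun h => hQ₀dne (by rw [h, Polynomial.coeff_zero])
    have hQ₀deg : Q₀.natDegree = d := by
      refine le_antisymm (Polynomial.natDegree_le_iff_coeff_eq_zero.2 fun N hN => ?_)
        (Polynomial.le_natDegree_of_ne_zero hQ₀dne)
      exact HeightAux.coeff_tw_of_gt hN
    have hrel : (a₁ * α₁) * algebraMap (MvPolynomial (Fin n) k) L c = α₁ * algebraMap (MvPolynomial (Fin n) k) L b := by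
      rw [mul_comm a₁ α₁, mul_assoc, ha₁]
    have haQ₀ : Polynomial.aeval (a₁ * α₁) Q₀ = 0 := by
      rw [hQ₀def, HeightAux.aeval_tw b c le_rfl hrel, hPa, mul_zero]
    set Q := Q₀.primPart with hQdef
    have hQprim : Q.IsPrimitive := Q₀.isPrimitive_primPart
    have hQne : Q ≠ 0 := Q₀.primPart_ne_zero
    have hcontne : Q₀.content ≠ 0 := fun h => hQ₀ne (Polynomial.content_eq_zero_iff.1 h)
    have haQ : Polynomial.aeval (a₁ * α₁) Q = 0 := by
      have h1 := haQ₀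
      rw [Q₀.eq_C_content_mul_primPart, map_mul, Polynomial.aeval_C] at h1
      rcases mul_eq_zero.1 h1 with h | h
      · exact absurd (hinj (by rw [h, map_zero])) hcontne
      · exact h
    refine ⟨Q, ⟨hQne, haQ, ?_⟩, ?_⟩
    · -- minimality
      intro R hR
      by_cases hR0 : R = 0
      · rw [hR0]; exact dvd_zero _
      set e := R.natDegree with he
      have hrel' : α₁ * algebraMap (MvPolynomial (Fin n) k) L b = (a₁ * α₁) * algebraMap (MvPolynomial (Fin n) k) L c := hrel.symm
      have h1 : Polynomial.aeval α₁ (HeightAux.tw c b e R) = 0 := by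
        rw [HeightAux.aeval_tw c b le_rfl hrel', hR, mul_zero]
      obtain ⟨S, hS⟩ := hPmin _ h1
      have hRe : R.coeff e ≠ 0 := by
        rw [he, ← Polynomial.leadingCoeff]
        exact Polynomial.leadingCoeff_ne_zero.2 hR0
      have htwRe : (HeightAux.tw c b e R).coeff e ≠ 0 := by
        rw [HeightAux.coeff_tw_of_le le_rfl, Nat.sub_self, pow_zero, mul_one]
        exact mul_ne_zero hRe (pow_ne_zero _ hb)
      have htwRne : HeightAux.tw c b e R ≠ 0 :=
        fun h => htwRe (by rw [h, Polynomial.coeff_zero])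
      have htwRdeg : (HeightAux.tw c b e R).natDegree = e := by
        refine le_antisymm (Polynomial.natDegree_le_iff_coeff_eq_zero.2 fun N hN => ?_)
          (Polynomial.le_natDegree_of_ne_zero htwRe)
        exact HeightAux.coeff_tw_of_gt hN
      have hSne : S ≠ 0 := by
        rintro rfl
        rw [mul_zero] at hS
        exact htwRne hS
      have hdeg : d + S.natDegree = e := by
        rw [← htwRdeg, hS, Polynomial.natDegree_mul hP0 hSne]
      have h2 : HeightAux.tw b c e (HeightAux.tw c b e R) = Polynomial.C ((b*c)^e) * R :=
        HeightAux.tw_tw b c le_rfl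
      have h3 : HeightAux.tw b c d P * HeightAux.tw b c S.natDegree S
          = HeightAux.tw b c e (P * S) := by
        rw [HeightAux.tw_mul b c le_rfl le_rfl, hdeg]
      have h4 : Polynomial.C ((b*c)^e) * R = Q₀ * HeightAux.tw b c S.natDegree S := by
        rw [← h2, hS, ← h3, hQ₀def]
      have h5 : Q ∣ Polynomial.C ((b*c)^e) * R := by
        rw [h4]
        exact dvd_mul_of_dvd_left (Q₀.primPart_dvd) _
      exact HeightAux.isPrimitive_dvd_of_dvd_C_mul hQprim
        (pow_ne_zero _ (mul_ne_zero hb hc)) h5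
    · -- height bound
      have hQdeg : Q.natDegree = d := by rw [hQdef, Polynomial.natDegree_primPart, hQ₀deg]
      refine heightP_le ?_
      intro i hi
      rw [hQdeg] at hi
      have hcoeff : Q₀.coeff i = Q₀.content * Q.coeff i := by
        conv_lhs => rw [Q₀.eq_C_content_mul_primPart]
        rw [Polynomial.coeff_C_mul]
      have step1 : (Q.coeff i).totalDegree ≤ (Q₀.coeff i).totalDegree := by
        by_cases h0 : Q.coeff i = 0
        · rw [h0]; simp
        · calc (Q.coeff i).totalDegree
              ≤ ((Q.coeff i) * Q₀.content).totalDegree :=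
                HeightAux.totalDegree_le_mul h0 hcontne
            _ = (Q₀.coeff i).totalDegree := by rw [mul_comm, ← hcoeff]
      refine step1.trans ?_
      have hQ₀i : Q₀.coeff i = P.coeff i * b ^ (d - i) * c ^ i :=
        HeightAux.coeff_tw_of_le hi
      rw [hQ₀i]
      calc (P.coeff i * b ^ (d - i) * c ^ i).totalDegree
          ≤ (P.coeff i * b ^ (d - i)).totalDegree + (c ^ i).totalDegree :=
            MvPolynomial.totalDegree_mul _ _
        _ ≤ (P.coeff i).totalDegree + (b ^ (d-i)).totalDegree + (c ^ i).totalDegree :=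
            Nat.add_le_add_right (MvPolynomial.totalDegree_mul _ _) _
        _ ≤ heightP P + (d - i) * b.totalDegree + i * c.totalDegree := by
            refine add_le_add (add_le_add (totalDegree_coeff_le_heightP P i)
              (MvPolynomial.totalDegree_pow _ _)) (MvPolynomial.totalDegree_pow _ _)
        _ ≤ heightP P + (d - i) * M + i * M := by
            refine add_le_add (Nat.add_le_add_left ?_ _) ?_
            · exact Nat.mul_le_mul_left _ (le_max_left _ _)
            · exact Nat.mul_le_mul_left _ (le_max_right _ _)
        _ ≤ heightP P + d * M := by
            rw [add_assoc, ← Nat.add_mul]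
            have : (d - i + i) = d := by omega
            rw [this]
end
end

section
/- Let f be an algebraic power series over k in x = (x', xₙ) that is xₙ-regular of order d (i.e., f(0,…,0,xₙ) is a nonzero series of order d in xₙ). If α ∈ an algebraic closure of k((x')) satisfies ord_{x'}(α) > 0 and f(x', α) = 0, then α is algebraic over k(x') with H(α) ≤ H(f) and Deg(α) ≤ H(f). -/
open Polynomial MvPowerSeries

noncomputable section

variable {k : Type*} [Field k] {σ : Type*}

/-- A polynomial in the variables `x' = (x₁, …, x_{n-1})`, viewed as a power series in
`(xₙ, x₁, …, x_{n-1})` (the distinguished variable `xₙ` is the variable of index `0`). -/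
def polyIncl {n : ℕ} (p : MvPolynomial (Fin n) k) : MvPowerSeries (Fin (n + 1)) k :=
  MvPolynomial.coeToMvPowerSeries.ringHom (MvPolynomial.rename Fin.succ p)

namespace ProofAux

lemma totalDegree_add_le_totalDegree_mul {R : Type*} [CommRing R] [IsDomain R] {τ : Type*}
    {a b : MvPolynomial τ R} (ha : a ≠ 0) (hb : b ≠ 0) :
    a.totalDegree + b.totalDegree ≤ (a * b).totalDegree := by
  classical
  open MvPolynomial in
  set da := a.totalDegree with hda
  set db := b.totalDegree with hdb
  set A := homogeneousComponent da a with hA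
  set B := homogeneousComponent db b with hB
  have hdegsum : ∀ s : τ →₀ ℕ, (s.sum fun _ e => e) = s.degree := fun s => rfl
  have hAne : A ≠ 0 := by
    obtain ⟨d, hd, hsum⟩ := Finset.exists_mem_eq_sup a.support
      (Finset.nonempty_iff_ne_empty.mpr (fun h => ha (support_eq_empty.mp h)))
      (fun s : τ →₀ ℕ => s.sum fun _ e => e)
    intro h0
    have hcoeff : coeff d A = coeff d a := by
      rw [hA, MvPolynomial.coeff_homogeneousComponent, if_pos]
      rw [← hdegsum d, ← hsum]; rfl
    rw [h0] at hcoeff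
    exact (mem_support_iff.mp hd) hcoeff.symm
  have hBne : B ≠ 0 := by
    obtain ⟨d, hd, hsum⟩ := Finset.exists_mem_eq_sup b.support
      (Finset.nonempty_iff_ne_empty.mpr (fun h => hb (support_eq_empty.mp h)))
      (fun s : τ →₀ ℕ => s.sum fun _ e => e)
    intro h0
    have hcoeff : coeff d B = coeff d b := by
      rw [hB, MvPolynomial.coeff_homogeneousComponent, if_pos]
      rw [← hdegsum d, ← hsum]; rfl
    rw [h0] at hcoeff
    exact (mem_support_iff.mp hd) hcoeff.symm
  have hABne : A * B ≠ 0 := mul_ne_zero hAne hBne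
  obtain ⟨d, hd⟩ := Finset.nonempty_iff_ne_empty.mpr
    (fun h => hABne (support_eq_empty.mp h))
  have hhomAB : (A * B).IsHomogeneous (da + db) :=
    (homogeneousComponent_isHomogeneous da a).mul (homogeneousComponent_isHomogeneous db b)
  have hddeg : d.degree = da + db := by
    by_contra h
    exact (mem_support_iff.mp hd) (hhomAB.coeff_eq_zero h)
  have claim : coeff d (a * b) = coeff d (A * B) := by
    rw [MvPolynomial.coeff_mul, MvPolynomial.coeff_mul]
    apply Finset.sum_congr rfl
    rintro ⟨u, v⟩ huv
    have huvd : u + v = d := Finset.HasAntidiagonal.mem_antidiagonal.mp huv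
    have hsum : u.degree + v.degree = da + db := by
      rw [← hddeg, ← huvd]
      simp [Finsupp.degree_eq_weight_one, map_add]
    have hcu : coeff u A = if u.degree = da then coeff u a else 0 :=
      MvPolynomial.coeff_homogeneousComponent _ _ _
    have hcv : coeff v B = if v.degree = db then coeff v b else 0 :=
      MvPolynomial.coeff_homogeneousComponent _ _ _
    rcases lt_trichotomy u.degree da with h | h | h
    · have hv : db < v.degree := by omega
      have h1 : coeff v b = 0 := coeff_eq_zero_of_totalDegree_lt hv
      have h2 : coeff v B = 0 := by rw [hcv, if_neg (by omega)]
      simp [h1, h2]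
    · have hv : v.degree = db := by omega
      rw [hcu, hcv, if_pos h, if_pos hv]
    · have h1 : coeff u a = 0 := coeff_eq_zero_of_totalDegree_lt h
      have h2 : coeff u A = 0 := by rw [hcu, if_neg (by omega)]
      simp [h1, h2]
  have hmem : d ∈ (a * b).support := by
    rw [MvPolynomial.mem_support_iff, claim]
    exact MvPolynomial.mem_support_iff.mp hd
  calc da + db = d.degree := hddeg.symm
    _ = d.sum fun _ e => e := (hdegsum d).symm
    _ ≤ (a * b).totalDegree := MvPolynomial.le_totalDegree hmem

lemma heightP_le_totalDegree_symm {k : Type*} [Field k] {n : ℕ}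
    (Q : Polynomial (MvPolynomial (Fin n) k)) :
    heightP Q ≤ ((MvPolynomial.finSuccEquiv k n).symm Q).totalDegree := by
  apply Finset.sup_le
  intro i _
  by_cases h : Q.coeff i = 0
  · simp [h]
  · have h' : (MvPolynomial.finSuccEquiv k n
        ((MvPolynomial.finSuccEquiv k n).symm Q)).coeff i ≠ 0 := by
      rwa [AlgEquiv.apply_symm_apply]
    have := MvPolynomial.totalDegree_coeff_finSuccEquiv_add_le
      ((MvPolynomial.finSuccEquiv k n).symm Q) i h'
    rw [AlgEquiv.apply_symm_apply] at this
    omega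

lemma natDegree_le_totalDegree_symm {k : Type*} [Field k] {n : ℕ}
    (Q : Polynomial (MvPolynomial (Fin n) k)) :
    Q.natDegree ≤ ((MvPolynomial.finSuccEquiv k n).symm Q).totalDegree := by
  have h := MvPolynomial.natDegree_finSuccEquiv ((MvPolynomial.finSuccEquiv k n).symm Q)
  rw [AlgEquiv.apply_symm_apply] at h
  rw [h]
  exact MvPolynomial.degreeOf_le_totalDegree _ _

end ProofAux

/-- Let `f` be an algebraic power series, `xₙ`-regular (here the
distinguished variable `xₙ` has index `0`), with minimal polynomial `P`. Let `α` be a root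
of `f` of positive order in an algebraic closure `L` of `k((x'))` — encoded by the
substitution ring homomorphism `φ : k⟦x⟧ → L` fixing `k⟦x'⟧ ⊇ k[x']` and sending `xₙ` to
`α`, with `φ f = 0`. Then `α` is algebraic over `k(x')` with `H(α) ≤ H(f)` and
`Deg(α) ≤ H(f)`. -/
theorem root_algebraic_height_le {n : ℕ} {L : Type*} [Field L]
    [Algebra (MvPolynomial (Fin n) k) L]
    (hinj : Function.Injective (algebraMap (MvPolynomial (Fin n) k) L))
    (f : MvPowerSeries (Fin (n + 1)) k)
    (hreg : ∃ m : ℕ, MvPowerSeries.coeff (Finsupp.single 0 m) f ≠ 0)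
    (P : Polynomial (MvPolynomial (Fin (n + 1)) k)) (hP : IsMinPolyOf P f)
    (φ : MvPowerSeries (Fin (n + 1)) k →+* L)
    (hφ : ∀ p : MvPolynomial (Fin n) k,
      φ (polyIncl p) = algebraMap (MvPolynomial (Fin n) k) L p)
    (α : L) (hα : φ (MvPowerSeries.X 0) = α) (hroot : φ f = 0) :
    ∃ Q : Polynomial (MvPolynomial (Fin n) k), IsMinPolyE Q α ∧
      heightP Q ≤ heightP P ∧ Q.natDegree ≤ heightP P := by
  classical
  obtain ⟨hPne, hPev, hPmin⟩ := hP
  have hf0 : f ≠ 0 := by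
    obtain ⟨m, hm⟩ := hreg
    intro h
    exact hm (by rw [h]; simp)
  -- the constant coefficient `P.coeff 0` is nonzero
  have hc0 : P.coeff 0 ≠ 0 := by
    intro h
    obtain ⟨P', hP'⟩ := Polynomial.X_dvd_iff.mpr h
    have hP'ne : P' ≠ 0 := by
      rintro rfl
      rw [mul_zero] at hP'
      exact hPne hP'
    have hev : pEval P' f = 0 := by
      have hkey : pEval P f = f * pEval P' f := by
        rw [hP']
        unfold pEval
        rw [Polynomial.map_mul, Polynomial.eval_mul, Polynomial.map_X, Polynomial.eval_X]
      rw [hPev] at hkey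
      rcases mul_eq_zero.mp hkey.symm with h' | h'
      · exact absurd h' hf0
      · exact h'
    have h1 : P.natDegree ≤ P'.natDegree := Polynomial.natDegree_le_of_dvd (hPmin P' hev) hP'ne
    have h2 : P.natDegree = 1 + P'.natDegree := by
      rw [hP', Polynomial.natDegree_mul Polynomial.X_ne_zero hP'ne, Polynomial.natDegree_X]
    omega
  -- the substitution ring hom on polynomials
  set ψ : MvPolynomial (Fin (n + 1)) k →+* L :=
    φ.comp MvPolynomial.coeToMvPowerSeries.ringHom with hψdef
  have hψc : ψ (P.coeff 0) = 0 := by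
    have h1 : pEval P f = Polynomial.eval₂ MvPolynomial.coeToMvPowerSeries.ringHom f P := by
      unfold pEval
      rw [Polynomial.eval_map]
    have h2 := congrArg φ hPev
    rw [h1, Polynomial.hom_eval₂, hroot, Polynomial.eval₂_at_zero] at h2
    simp at h2; exact h2
  -- key compatibility: aeval α ∘ finSuccEquiv = ψ
  have hkeyhom : ((Polynomial.aeval α :
        Polynomial (MvPolynomial (Fin n) k) →ₐ[MvPolynomial (Fin n) k] L) :
        Polynomial (MvPolynomial (Fin n) k) →+* L).comp
      (MvPolynomial.finSuccEquiv k n :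
        MvPolynomial (Fin (n + 1)) k →+* Polynomial (MvPolynomial (Fin n) k)) = ψ := by
    apply MvPolynomial.ringHom_ext
    · intro a
      have hl : MvPolynomial.finSuccEquiv k n (MvPolynomial.C a) =
          Polynomial.C (MvPolynomial.C a) := by
        simp [MvPolynomial.finSuccEquiv_apply]
      have hr : ψ (MvPolynomial.C a) = algebraMap (MvPolynomial (Fin n) k) L
          (MvPolynomial.C a) := by
        rw [hψdef]
        have h := hφ (MvPolynomial.C a)
        unfold polyIncl at h
        rw [MvPolynomial.rename_C] at h
        exact h
      simp only [RingHom.coe_comp, Function.comp_apply, RingHom.coe_coe, hl, hr,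
        Polynomial.aeval_C]
    · intro i
      refine Fin.cases ?_ ?_ i
      · have hr : ψ (MvPolynomial.X 0) = α := by
          rw [hψdef]
          simp only [RingHom.coe_comp, Function.comp_apply,
            MvPolynomial.coeToMvPowerSeries.ringHom_apply, MvPolynomial.coe_X]
          exact hα
        simp only [RingHom.coe_comp, Function.comp_apply, RingHom.coe_coe,
          MvPolynomial.finSuccEquiv_X_zero, Polynomial.aeval_X, hr]
      · intro j
        have hr : ψ (MvPolynomial.X j.succ) =
            algebraMap (MvPolynomial (Fin n) k) L (MvPolynomial.X j) := by
          rw [hψdef]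
          have h := hφ (MvPolynomial.X j)
          unfold polyIncl at h
          rw [MvPolynomial.rename_X] at h
          exact h
        simp only [RingHom.coe_comp, Function.comp_apply, RingHom.coe_coe,
          MvPolynomial.finSuccEquiv_X_succ, Polynomial.aeval_C, hr]
  have hkey : ∀ g : MvPolynomial (Fin (n + 1)) k,
      Polynomial.aeval α (MvPolynomial.finSuccEquiv k n g) = ψ g := fun g =>
    congrFun (congrArg (fun h : MvPolynomial (Fin (n + 1)) k →+* L => (h : _ → _)) hkeyhom) g
  -- pass to a polynomial in `T` over `k[x']`
  set c' : Polynomial (MvPolynomial (Fin n) k) :=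
    MvPolynomial.finSuccEquiv k n (P.coeff 0) with hc'def
  have hc'0 : c' ≠ 0 := by
    intro h
    exact hc0 ((map_eq_zero_iff _ (MvPolynomial.finSuccEquiv k n).injective).mp h)
  have hc'ev : Polynomial.aeval α c' = 0 := by
    rw [hc'def, hkey, hψc]
  -- fraction field machinery
  letI : StrongNormalizationMonoid (MvPolynomial (Fin n) k) :=
    UniqueFactorizationMonoid.normalizationMonoid
  letI : NormalizedGCDMonoid (MvPolynomial (Fin n) k) :=
    UniqueFactorizationMonoid.toNormalizedGCDMonoid (MvPolynomial (Fin n) k)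
  set K := FractionRing (MvPolynomial (Fin n) k) with hKdef
  set e : K →+* L := IsFractionRing.lift hinj with hedef
  letI : Algebra K L := e.toAlgebra
  have hecomp : ∀ r : MvPolynomial (Fin n) k,
      e (algebraMap (MvPolynomial (Fin n) k) K r) = algebraMap (MvPolynomial (Fin n) k) L r :=
    fun r => IsFractionRing.lift_algebraMap hinj r
  have haevalmap : ∀ q : Polynomial (MvPolynomial (Fin n) k),
      Polynomial.aeval (R := K) α (q.map (algebraMap (MvPolynomial (Fin n) k) K)) =
        Polynomial.aeval (R := MvPolynomial (Fin n) k) α q := by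
    intro q
    rw [Polynomial.aeval_def, Polynomial.aeval_def, Polynomial.eval₂_map]
    congr 1
    exact RingHom.ext hecomp
  have hRKinj := IsFractionRing.injective (MvPolynomial (Fin n) k) K
  have hc'map0 : c'.map (algebraMap (MvPolynomial (Fin n) k) K) ≠ 0 := by
    intro h
    exact hc'0 (Polynomial.map_injective _ hRKinj (by rw [h, Polynomial.map_zero]))
  have hint : IsIntegral K α :=
    IsAlgebraic.isIntegral ⟨c'.map (algebraMap (MvPolynomial (Fin n) k) K), hc'map0,
      by rw [haevalmap]; exact hc'ev⟩
  set μ : Polynomial K := minpoly K α with hμdef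
  have hμ0 : μ ≠ 0 := minpoly.ne_zero hint
  -- clear denominators and take the primitive part
  set N : Polynomial (MvPolynomial (Fin n) k) :=
    IsLocalization.integerNormalization (nonZeroDivisors (MvPolynomial (Fin n) k)) μ with hNdef
  obtain ⟨b, hb⟩ := IsLocalization.integerNormalization_map_to_map (nonZeroDivisors (MvPolynomial (Fin n) k)) μ
  have hbne : algebraMap (MvPolynomial (Fin n) k) K (b : MvPolynomial (Fin n) k) ≠ 0 := fun h =>
    nonZeroDivisors.coe_ne_zero b ((map_eq_zero_iff _ hRKinj).mp h)
  have hbmul : N.map (algebraMap (MvPolynomial (Fin n) k) K) =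
      Polynomial.C (algebraMap (MvPolynomial (Fin n) k) K (b : MvPolynomial (Fin n) k)) * μ := by
    rw [← hNdef] at hb
    rw [hb, Algebra.smul_def, Polynomial.algebraMap_apply]
  have hN0 : N ≠ 0 := by
    intro h
    rw [h, Polynomial.map_zero] at hbmul
    rcases mul_eq_zero.mp hbmul.symm with h' | h'
    · exact hbne (Polynomial.C_eq_zero.mp h')
    · exact hμ0 h'
  set Q : Polynomial (MvPolynomial (Fin n) k) := N.primPart with hQdef
  have hQprim : Q.IsPrimitive := N.isPrimitive_primPart
  have hQ0 : Q ≠ 0 := N.primPart_ne_zero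
  have hcontne : algebraMap (MvPolynomial (Fin n) k) K N.content ≠ 0 := by
    intro h
    exact hN0 (Polynomial.content_eq_zero_iff.mp ((map_eq_zero_iff _ hRKinj).mp h))
  have hNfact : N.map (algebraMap (MvPolynomial (Fin n) k) K) =
      Polynomial.C (algebraMap (MvPolynomial (Fin n) k) K N.content) *
        Q.map (algebraMap (MvPolynomial (Fin n) k) K) := by
    conv_lhs => rw [N.eq_C_content_mul_primPart]
    rw [Polynomial.map_mul, Polynomial.map_C]
  -- `Q.map` is associated to `μ`
  have hassoc : Associated (Q.map (algebraMap (MvPolynomial (Fin n) k) K)) μ := by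
    have hu1 : IsUnit (Polynomial.C (algebraMap (MvPolynomial (Fin n) k) K N.content)) :=
      Polynomial.isUnit_C.mpr (isUnit_iff_ne_zero.mpr hcontne)
    have hu2 : IsUnit (Polynomial.C
        (algebraMap (MvPolynomial (Fin n) k) K (b : MvPolynomial (Fin n) k))) :=
      Polynomial.isUnit_C.mpr (isUnit_iff_ne_zero.mpr hbne)
    have h1 : Associated (Q.map (algebraMap (MvPolynomial (Fin n) k) K))
        (N.map (algebraMap (MvPolynomial (Fin n) k) K)) := by
      rw [hNfact]
      exact (associated_unit_mul_left _ _ hu1).symm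
    rw [hbmul] at h1
    exact h1.trans (associated_unit_mul_left _ _ hu2)
  -- the primitive part kills α
  have hQev : Polynomial.aeval (R := MvPolynomial (Fin n) k) α Q = 0 := by
    rw [← haevalmap]
    obtain ⟨r, hr⟩ := hassoc.symm.dvd
    rw [hr, map_mul, minpoly.aeval, zero_mul]
  -- minimality
  have hdvd_of_ann : ∀ q : Polynomial (MvPolynomial (Fin n) k),
      Polynomial.aeval (R := MvPolynomial (Fin n) k) α q = 0 → q ≠ 0 → Q ∣ q := by
    intro q hq hq0
    have h1 : μ ∣ q.map (algebraMap (MvPolynomial (Fin n) k) K) :=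
      minpoly.dvd K α (by rw [haevalmap]; exact hq)
    have h3 : Q.map (algebraMap (MvPolynomial (Fin n) k) K) ∣
        q.map (algebraMap (MvPolynomial (Fin n) k) K) := hassoc.dvd.trans h1
    have hqcont : algebraMap (MvPolynomial (Fin n) k) K q.content ≠ 0 := by
      intro h
      exact hq0 (Polynomial.content_eq_zero_iff.mp ((map_eq_zero_iff _ hRKinj).mp h))
    have h4 : Associated (q.map (algebraMap (MvPolynomial (Fin n) k) K))
        (q.primPart.map (algebraMap (MvPolynomial (Fin n) k) K)) := by
      conv_lhs => rw [q.eq_C_content_mul_primPart]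
      rw [Polynomial.map_mul, Polynomial.map_C]
      exact associated_unit_mul_left _ _
        (Polynomial.isUnit_C.mpr (isUnit_iff_ne_zero.mpr hqcont))
    have h2 : Q.map (algebraMap (MvPolynomial (Fin n) k) K) ∣
        q.primPart.map (algebraMap (MvPolynomial (Fin n) k) K) := h4.dvd_iff_dvd_right.mp h3
    exact (hQprim.dvd_of_fraction_map_dvd_fraction_map (K := K)
      h2).trans q.primPart_dvd
  -- `Q` divides `c'`
  obtain ⟨h, hh⟩ := hdvd_of_ann c' hc'ev hc'0
  have hhne : h ≠ 0 := by
    rintro rfl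
    rw [mul_zero] at hh
    exact hc'0 hh
  -- degree bounds
  set QQ := (MvPolynomial.finSuccEquiv k n).symm Q with hQQdef
  set HH := (MvPolynomial.finSuccEquiv k n).symm h with hHHdef
  have hQQ0 : QQ ≠ 0 := by
    intro h0
    exact hQ0 ((map_eq_zero_iff _ (MvPolynomial.finSuccEquiv k n).symm.injective).mp h0)
  have hHH0 : HH ≠ 0 := by
    intro h0
    exact hhne ((map_eq_zero_iff _ (MvPolynomial.finSuccEquiv k n).symm.injective).mp h0)
  have hprod : P.coeff 0 = QQ * HH := by
    have h0 : (MvPolynomial.finSuccEquiv k n).symm c' = QQ * HH := by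
      rw [hh, map_mul]
    rw [hc'def, AlgEquiv.symm_apply_apply] at h0
    exact h0
  have htot : QQ.totalDegree ≤ (P.coeff 0).totalDegree := by
    rw [hprod]
    have := ProofAux.totalDegree_add_le_totalDegree_mul hQQ0 hHH0
    omega
  have hP0le : (P.coeff 0).totalDegree ≤ heightP P := by
    unfold heightP
    exact Finset.le_sup (f := fun i => (P.coeff i).totalDegree)
      (Finset.mem_range.mpr (Nat.succ_pos _))
  refine ⟨Q, ⟨hQ0, hQev, ?_⟩, ?_, ?_⟩
  · intro q hq
    by_cases h0 : q = 0
    · simp [h0]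
    · exact hdvd_of_ann q hq h0
  · exact (ProofAux.heightP_le_totalDegree_symm Q).trans (htot.trans hP0le)
  · exact (ProofAux.natDegree_le_totalDegree_symm Q).trans (htot.trans hP0le)

end
end

section
/- Let f(x,y) be an algebraic power series (y a single variable) and q a positive integer. Then f(x,y^q) is an algebraic power series, Deg(f(x,y^q)) = Deg(f(x,y)), and H(f(x,y)) ≤ H(f(x,y^q)) ≤ q·H(f(x,y)). Moreover, P(x,y,T) is the minimal polynomial of f(x,y) if and only if P(x,y^q,T) is the minimal polynomial of f(x,y^q). -/
open Polynomial MvPowerSeries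

noncomputable section

variable {k : Type*} [Field k] {σ : Type*}

/-- `f(x, y^q)`, where the distinguished variable `y` has index `0` among the `n+1`
variables `(y, x₁, …, xₙ)`. -/
def expandY {n : ℕ} (q : ℕ) (f : MvPowerSeries (Fin (n + 1)) k) :
    MvPowerSeries (Fin (n + 1)) k :=
  fun d => if q ∣ d 0 then
    MvPowerSeries.coeff (R := k) (Finsupp.update d 0 (d 0 / q)) f else 0

/-- The algebra endomorphism of `k[y, x₁, …, xₙ]` replacing `y` by `y^q`. -/
def expVar {n : ℕ} (q : ℕ) : MvPolynomial (Fin (n + 1)) k →ₐ[k] MvPolynomial (Fin (n + 1)) k :=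
  MvPolynomial.aeval fun i => if i = 0 then MvPolynomial.X 0 ^ q else MvPolynomial.X i

namespace Aux

variable {n : ℕ}

def phi (q : ℕ) (d : Fin (n + 1) →₀ ℕ) : Fin (n + 1) →₀ ℕ :=
  Finsupp.update d 0 (q * d 0)

def psi (q : ℕ) (d : Fin (n + 1) →₀ ℕ) : Fin (n + 1) →₀ ℕ :=
  Finsupp.update d 0 (d 0 / q)

@[simp] lemma phi_apply_zero (q : ℕ) (d : Fin (n + 1) →₀ ℕ) : phi q d 0 = q * d 0 := by
  simp [phi]

lemma phi_apply_ne (q : ℕ) (d : Fin (n + 1) →₀ ℕ) {i : Fin (n + 1)} (hi : i ≠ 0) :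
    phi q d i = d i := by
  simp [phi, Finsupp.coe_update, Function.update_of_ne hi]

lemma psi_phi {q : ℕ} (hq : 0 < q) (d : Fin (n + 1) →₀ ℕ) : psi q (phi q d) = d := by
  ext i
  rcases eq_or_ne i 0 with rfl | hi
  · simp [psi, phi, Nat.mul_div_cancel_left _ hq]
  · simp [psi, Finsupp.coe_update, Function.update_of_ne hi, phi_apply_ne q d hi]

lemma phi_psi {q : ℕ} {d : Fin (n + 1) →₀ ℕ} (h : q ∣ d 0) : phi q (psi q d) = d := by
  ext i
  rcases eq_or_ne i 0 with rfl | hi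
  · simp [psi, phi, Nat.mul_div_cancel' h]
  · simp [phi, psi, Finsupp.coe_update, Function.update_of_ne hi]

lemma phi_inj {q : ℕ} (hq : 0 < q) : Function.Injective (phi (n := n) q) :=
  Function.LeftInverse.injective (psi_phi hq)

lemma dvd_phi (q : ℕ) (d : Fin (n + 1) →₀ ℕ) : q ∣ phi q d 0 := by simp

lemma phi_add (q : ℕ) (a b : Fin (n + 1) →₀ ℕ) : phi q (a + b) = phi q a + phi q b := by
  ext i
  rcases eq_or_ne i 0 with rfl | hi
  · simp [mul_add]
  · simp [phi_apply_ne q _ hi]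

@[simp] lemma phi_zero (q : ℕ) : phi (n := n) q 0 = 0 := by
  ext i
  rcases eq_or_ne i 0 with rfl | hi
  · simp
  · simp [phi_apply_ne q _ hi]

lemma phi_eq_iff {q : ℕ} (hq : 0 < q) {d e : Fin (n + 1) →₀ ℕ} (h : q ∣ d 0) :
    psi q d = e ↔ d = phi q e := by
  constructor
  · rintro rfl; exact (phi_psi h).symm
  · rintro rfl; exact psi_phi hq e

lemma coeff_expandY {q : ℕ} (f : MvPowerSeries (Fin (n + 1)) k) (d : Fin (n + 1) →₀ ℕ) :
    MvPowerSeries.coeff d (expandY q f) =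
      if q ∣ d 0 then MvPowerSeries.coeff (psi q d) f else 0 := rfl

lemma coeff_expandY_phi {q : ℕ} (hq : 0 < q) (f : MvPowerSeries (Fin (n + 1)) k)
    (e : Fin (n + 1) →₀ ℕ) :
    MvPowerSeries.coeff (phi q e) (expandY q f) = MvPowerSeries.coeff e f := by
  rw [coeff_expandY, if_pos (dvd_phi q e), psi_phi hq]

lemma coeff_expandY_of_not_dvd {q : ℕ} {f : MvPowerSeries (Fin (n + 1)) k}
    {d : Fin (n + 1) →₀ ℕ} (h : ¬ q ∣ d 0) :
    MvPowerSeries.coeff d (expandY q f) = 0 := by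
  rw [coeff_expandY, if_neg h]

end Aux

namespace Aux2
open Aux
variable {n : ℕ}

lemma expandY_zero (q : ℕ) : expandY (k := k) (n := n) q 0 = 0 := by
  ext d
  rw [coeff_expandY]
  simp

lemma expandY_add (q : ℕ) (f g : MvPowerSeries (Fin (n + 1)) k) :
    expandY q (f + g) = expandY q f + expandY q g := by
  ext d
  rw [map_add, coeff_expandY, coeff_expandY, coeff_expandY]
  split_ifs <;> simp

lemma expandY_one {q : ℕ} (hq : 0 < q) : expandY (k := k) (n := n) q 1 = 1 := by
  ext d
  rw [coeff_expandY]
  by_cases h : q ∣ d 0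
  · rw [if_pos h, MvPowerSeries.coeff_one, MvPowerSeries.coeff_one]
    have : psi q d = 0 ↔ d = 0 := by
      rw [phi_eq_iff hq h, phi_zero]
    simp only [this]
  · rw [if_neg h, MvPowerSeries.coeff_one, eq_comm, if_neg]
    rintro rfl
    exact h (by simp)

lemma expandY_mul {q : ℕ} (hq : 0 < q) (f g : MvPowerSeries (Fin (n + 1)) k) :
    expandY q (f * g) = expandY q f * expandY q g := by
  ext d
  rw [coeff_expandY, MvPowerSeries.coeff_mul]
  by_cases h : q ∣ d 0
  · rw [if_pos h, MvPowerSeries.coeff_mul]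
    set e := psi q d with he
    have hd : d = phi q e := (phi_eq_iff hq h).mp rfl
    rw [hd]
    refine Finset.sum_bij_ne_zero (fun p _ _ => (phi q p.1, phi q p.2)) ?_ ?_ ?_ ?_
    · intro a h1 h2
      rw [Finset.HasAntidiagonal.mem_antidiagonal] at h1 ⊢
      rw [← phi_add, h1]
    · intro a1 _ _ a2 _ _ haa
      exact Prod.ext (phi_inj hq (congrArg Prod.fst haa)) (phi_inj hq (congrArg Prod.snd haa))
    · intro b hb hb0
      have hb1 : q ∣ b.1 0 := by
        by_contra hc
        exact hb0 (by rw [coeff_expandY_of_not_dvd hc, zero_mul])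
      have hb2 : q ∣ b.2 0 := by
        by_contra hc
        exact hb0 (by rw [coeff_expandY_of_not_dvd (f := g) hc, mul_zero])
      refine ⟨(psi q b.1, psi q b.2), ?_, ?_, ?_⟩
      · rw [Finset.HasAntidiagonal.mem_antidiagonal] at hb ⊢
        apply phi_inj hq
        rw [phi_add, phi_psi hb1, phi_psi hb2, hb]
      · rw [show ((psi q b.1, psi q b.2) :
            (Fin (n+1) →₀ ℕ) × (Fin (n+1) →₀ ℕ)).1 = psi q b.1 from rfl,
          show ((psi q b.1, psi q b.2) :
            (Fin (n+1) →₀ ℕ) × (Fin (n+1) →₀ ℕ)).2 = psi q b.2 from rfl]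
        rwa [coeff_expandY, if_pos hb1, coeff_expandY, if_pos hb2] at hb0
      · exact Prod.ext (by simp [phi_psi hb1]) (by simp [phi_psi hb2])
    · intro a _ _
      dsimp only
      rw [coeff_expandY_phi hq, coeff_expandY_phi hq]
  · rw [if_neg h]
    refine (Finset.sum_eq_zero fun p hp => ?_).symm
    simp only [Finset.HasAntidiagonal.mem_antidiagonal] at hp
    by_cases h1 : q ∣ p.1 0
    · rw [coeff_expandY_of_not_dvd (f := g) (fun h2 => h ?_), mul_zero]
      rw [← hp, Finsupp.add_apply]
      exact Nat.dvd_add h1 h2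
    · rw [coeff_expandY_of_not_dvd h1, zero_mul]

def E (q : ℕ) (hq : 0 < q) : MvPowerSeries (Fin (n + 1)) k →+* MvPowerSeries (Fin (n + 1)) k where
  toFun := expandY q
  map_zero' := expandY_zero q
  map_add' := expandY_add q
  map_one' := expandY_one hq
  map_mul' := expandY_mul hq

lemma expandY_injective {q : ℕ} (hq : 0 < q) :
    Function.Injective (expandY (k := k) (n := n) q) := by
  intro f g hfg
  ext e
  have := congrArg (MvPowerSeries.coeff (phi q e)) hfg
  rwa [coeff_expandY_phi hq, coeff_expandY_phi hq] at this

end Aux2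

namespace Aux3
open Aux Aux2

variable {n : ℕ}

lemma phi_single_zero {q : ℕ} : phi (n := n) q (Finsupp.single 0 1) = Finsupp.single 0 q := by
  ext i
  rcases eq_or_ne i 0 with rfl | hi
  · simp
  · simp [phi_apply_ne q _ hi, Finsupp.single_apply_eq_zero.2 fun h => absurd h.symm hi,
      Finsupp.single_eq_of_ne' (Ne.symm hi)]

lemma phi_single_ne {q : ℕ} {i : Fin (n + 1)} (hi : i ≠ 0) (m : ℕ) :
    phi q (Finsupp.single i m) = Finsupp.single i m := by
  ext j
  rcases eq_or_ne j 0 with rfl | hj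
  · simp [Finsupp.single_eq_of_ne' hi]
  · simp [phi_apply_ne q _ hj]

lemma expandY_monomial {q : ℕ} (hq : 0 < q) (e : Fin (n + 1) →₀ ℕ) (a : k) :
    expandY q (MvPowerSeries.monomial e a) = MvPowerSeries.monomial (phi q e) a := by
  classical
  ext d
  rw [coeff_expandY]
  by_cases h : q ∣ d 0
  · rw [if_pos h, MvPowerSeries.coeff_monomial, MvPowerSeries.coeff_monomial]
    simp only [phi_eq_iff hq h]
  · rw [if_neg h, MvPowerSeries.coeff_monomial, if_neg]
    rintro rfl
    exact h (dvd_phi q e)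

lemma coe_expVar {q : ℕ} (hq : 0 < q) (p : MvPolynomial (Fin (n + 1)) k) :
    ((expVar (k := k) q p : MvPolynomial (Fin (n + 1)) k) : MvPowerSeries (Fin (n + 1)) k)
      = expandY q (p : MvPowerSeries (Fin (n + 1)) k) := by
  have h1 : (MvPolynomial.coeToMvPowerSeries.ringHom.comp (expVar (k := k) (n := n) q).toRingHom)
      = (E q hq).comp MvPolynomial.coeToMvPowerSeries.ringHom := by
    apply MvPolynomial.ringHom_ext
    · intro a
      have h2 : expVar (k := k) (n := n) q (MvPolynomial.C a) = MvPolynomial.C a :=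
        MvPolynomial.aeval_C _ a
      have h3 : ((MvPolynomial.C a : MvPolynomial (Fin (n + 1)) k) :
          MvPowerSeries (Fin (n + 1)) k) = (MvPowerSeries.C a : MvPowerSeries (Fin (n + 1)) k) :=
        MvPolynomial.coe_C a
      simp only [RingHom.comp_apply, AlgHom.toRingHom_eq_coe, RingHom.coe_coe,
        MvPolynomial.coeToMvPowerSeries.ringHom_apply, h2, h3]
      show (MvPowerSeries.C a : MvPowerSeries (Fin (n + 1)) k) = expandY q ((MvPowerSeries.C a : MvPowerSeries (Fin (n + 1)) k))
      rw [← MvPowerSeries.monomial_zero_eq_C, expandY_monomial hq, phi_zero]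
    · intro i
      have h2 : expVar (k := k) (n := n) q (MvPolynomial.X i) =
          if i = 0 then MvPolynomial.X 0 ^ q else MvPolynomial.X i :=
        MvPolynomial.aeval_X _ i
      simp only [RingHom.comp_apply, AlgHom.toRingHom_eq_coe, RingHom.coe_coe,
        MvPolynomial.coeToMvPowerSeries.ringHom_apply, h2]
      show _ = expandY q ((MvPolynomial.X i : MvPolynomial (Fin (n + 1)) k) :
          MvPowerSeries (Fin (n + 1)) k)
      rw [MvPolynomial.coe_X, show (MvPowerSeries.X i : MvPowerSeries (Fin (n + 1)) k)
          = MvPowerSeries.monomial (Finsupp.single i 1) 1 from rfl,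
        expandY_monomial hq]
      rcases eq_or_ne i 0 with rfl | hi
      · rw [if_pos rfl, phi_single_zero, ← MvPowerSeries.X_pow_eq]
        push_cast
        rfl
      · rw [if_neg hi, phi_single_ne hi, MvPolynomial.coe_X]
        rfl
  exact congrFun (congrArg (fun (F : _ →+* _) => ⇑F) h1) p

end Aux3

namespace Aux4
open Aux Aux2 Aux3

variable {n : ℕ}

lemma coeff_expVar {q : ℕ} (hq : 0 < q) (p : MvPolynomial (Fin (n + 1)) k)
    (d : Fin (n + 1) →₀ ℕ) :
    MvPolynomial.coeff d (expVar (k := k) q p) =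
      if q ∣ d 0 then MvPolynomial.coeff (psi q d) p else 0 := by
  have h := congrArg (MvPowerSeries.coeff d) (coe_expVar hq p)
  rw [MvPolynomial.coeff_coe, coeff_expandY] at h
  simp only [MvPolynomial.coeff_coe] at h
  exact h

lemma coeff_expVar_phi {q : ℕ} (hq : 0 < q) (p : MvPolynomial (Fin (n + 1)) k)
    (e : Fin (n + 1) →₀ ℕ) :
    MvPolynomial.coeff (phi q e) (expVar (k := k) q p) = MvPolynomial.coeff e p := by
  rw [coeff_expVar hq, if_pos (dvd_phi q e), psi_phi hq]

lemma expVar_injective {q : ℕ} (hq : 0 < q) :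
    Function.Injective (expVar (k := k) (n := n) q) := by
  intro p r h
  apply MvPolynomial.coe_injective
  apply expandY_injective hq
  show expandY q ((p : MvPolynomial (Fin (n+1)) k) : MvPowerSeries (Fin (n+1)) k)
      = expandY q ((r : MvPolynomial (Fin (n+1)) k) : MvPowerSeries (Fin (n+1)) k)
  rw [← coe_expVar hq, ← coe_expVar hq, h]

lemma phi_eq_add_single {q : ℕ} (hq : 0 < q) (d : Fin (n + 1) →₀ ℕ) :
    phi q d = d + Finsupp.single 0 ((q - 1) * d 0) := by
  ext i
  rcases eq_or_ne i 0 with rfl | hi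
  · simp only [phi_apply_zero, Finsupp.add_apply, Finsupp.single_eq_same]
    have : q - 1 + 1 = q := Nat.sub_add_cancel hq
    nlinarith [this]
  · simp [phi_apply_ne q _ hi, Finsupp.single_eq_of_ne' (Ne.symm hi)]

lemma degree_phi {q : ℕ} (hq : 0 < q) (d : Fin (n + 1) →₀ ℕ) :
    (phi q d).sum (fun _ m => m) = d.sum (fun _ m => m) + (q - 1) * d 0 := by
  rw [phi_eq_add_single hq, Finsupp.sum_add_index (fun _ _ => rfl) (fun _ _ _ _ => rfl),
    Finsupp.sum_single_index rfl]

lemma apply_le_degree (d : Fin (n + 1) →₀ ℕ) (i : Fin (n + 1)) :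
    d i ≤ d.sum (fun _ m => m) := by
  by_cases h : i ∈ d.support
  · exact Finset.single_le_sum (fun _ _ => Nat.zero_le _) h
  · simp [Finsupp.notMem_support_iff.mp h]

lemma degree_le_degree_phi {q : ℕ} (hq : 0 < q) (d : Fin (n + 1) →₀ ℕ) :
    d.sum (fun _ m => m) ≤ (phi q d).sum (fun _ m => m) := by
  rw [degree_phi hq]; exact Nat.le_add_right _ _

lemma degree_phi_le {q : ℕ} (hq : 0 < q) (d : Fin (n + 1) →₀ ℕ) :
    (phi q d).sum (fun _ m => m) ≤ q * d.sum (fun _ m => m) := by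
  rw [degree_phi hq]
  have h1 := apply_le_degree d 0
  have h2 : (q - 1) * d 0 ≤ (q - 1) * d.sum (fun _ m => m) := Nat.mul_le_mul_left _ h1
  have h3 : d.sum (fun _ m => m) + (q - 1) * d.sum (fun _ m => m) = q * d.sum (fun _ m => m) := by
    have : q - 1 + 1 = q := Nat.sub_add_cancel hq
    nlinarith [this]
  omega

lemma totalDegree_le_expVar {q : ℕ} (hq : 0 < q) (p : MvPolynomial (Fin (n + 1)) k) :
    p.totalDegree ≤ (expVar (k := k) q p).totalDegree := by
  rw [MvPolynomial.totalDegree]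
  apply Finset.sup_le
  intro d hd
  calc d.sum (fun _ m => m) ≤ (phi q d).sum (fun _ m => m) := degree_le_degree_phi hq d
    _ ≤ (expVar (k := k) q p).totalDegree := by
        apply MvPolynomial.le_totalDegree
        rw [MvPolynomial.mem_support_iff, coeff_expVar_phi hq]
        exact MvPolynomial.mem_support_iff.mp hd

lemma totalDegree_expVar_le {q : ℕ} (hq : 0 < q) (p : MvPolynomial (Fin (n + 1)) k) :
    (expVar (k := k) q p).totalDegree ≤ q * p.totalDegree := by
  rw [MvPolynomial.totalDegree]
  apply Finset.sup_le
  intro d hd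
  rw [MvPolynomial.mem_support_iff, coeff_expVar hq] at hd
  by_cases h : q ∣ d 0
  · rw [if_pos h] at hd
    have hde : d = phi q (psi q d) := (phi_psi h).symm
    calc d.sum (fun _ m => m) = (phi q (psi q d)).sum (fun _ m => m) := by rw [← hde]
      _ ≤ q * (psi q d).sum (fun _ m => m) := degree_phi_le hq _
      _ ≤ q * p.totalDegree :=
          Nat.mul_le_mul_left _ (MvPolynomial.le_totalDegree
            (MvPolynomial.mem_support_iff.mpr hd))
  · rw [if_neg h] at hd; exact absurd rfl hd

end Aux4

namespace Aux5
open Aux Aux2 Aux3 Aux4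

variable {n : ℕ}

def sect {q : ℕ} (hq : 0 < q) (j : ℕ) (p : MvPolynomial (Fin (n + 1)) k) :
    MvPolynomial (Fin (n + 1)) k :=
  AddMonoidAlgebra.ofCoeff (Finsupp.comapDomain (fun e => phi q e + Finsupp.single 0 j) (AddMonoidAlgebra.coeff p)
    (Function.Injective.injOn fun a b hab => phi_inj hq (add_right_cancel hab)))

lemma coeff_sect {q : ℕ} (hq : 0 < q) (j : ℕ) (p : MvPolynomial (Fin (n + 1)) k)
    (d : Fin (n + 1) →₀ ℕ) :
    MvPolynomial.coeff d (sect hq j p) =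
      MvPolynomial.coeff (phi q d + Finsupp.single 0 j) p := rfl

lemma sect_decomp {q : ℕ} (hq : 0 < q) (p : MvPolynomial (Fin (n + 1)) k) :
    ∑ j ∈ Finset.range q, MvPolynomial.X 0 ^ j * expVar (k := k) q (sect hq j p) = p := by
  apply MvPolynomial.ext
  intro d
  rw [MvPolynomial.coeff_sum]
  have hterm : ∀ j ∈ Finset.range q,
      MvPolynomial.coeff d (MvPolynomial.X 0 ^ j * expVar (k := k) q (sect hq j p)) =
      if Finsupp.single (0 : Fin (n + 1)) j ≤ d ∧ q ∣ ((d - Finsupp.single 0 j) : Fin (n + 1) →₀ ℕ) 0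
        then MvPolynomial.coeff d p else 0 := by
    intro j _
    rw [MvPolynomial.X_pow_eq_monomial, MvPolynomial.coeff_monomial_mul', one_mul]
    by_cases hle : Finsupp.single (0 : Fin (n + 1)) j ≤ d
    · rw [if_pos hle, coeff_expVar hq]
      by_cases hdvd : q ∣ ((d - Finsupp.single 0 j) : Fin (n + 1) →₀ ℕ) 0
      · rw [if_pos hdvd, if_pos ⟨hle, hdvd⟩, coeff_sect hq, phi_psi hdvd,
          tsub_add_cancel_of_le hle]
      · rw [if_neg hdvd, if_neg (fun hc => hdvd hc.2)]
    · rw [if_neg hle, if_neg (fun hc => hle hc.1)]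
  rw [Finset.sum_congr rfl hterm]
  rw [Finset.sum_eq_single_of_mem (d 0 % q) (Finset.mem_range.mpr (Nat.mod_lt _ hq))]
  · rw [if_pos]
    constructor
    · exact Finsupp.single_le_iff.mpr (Nat.mod_le _ _)
    · rw [Finsupp.tsub_apply, Finsupp.single_eq_same]
      have := Nat.mod_add_div (d 0) q
      exact ⟨d 0 / q, by omega⟩
  · intro j hj hne
    rw [Finset.mem_range] at hj
    rw [if_neg]
    rintro ⟨hle, hdvd⟩
    rw [Finsupp.single_le_iff] at hle
    rw [Finsupp.tsub_apply, Finsupp.single_eq_same] at hdvd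
    obtain ⟨c, hc⟩ := hdvd
    have h1 : q * c + j = d 0 := by omega
    have h2 : (q * c + j) % q = j := by rw [Nat.mul_add_mod, Nat.mod_eq_of_lt hj]
    rw [h1] at h2
    exact hne h2.symm

end Aux5

namespace Aux6
open Aux Aux2 Aux3 Aux4 Aux5

variable {n : ℕ}

lemma sum_expandY_eq_zero {q : ℕ} (hq : 0 < q) {g : ℕ → MvPowerSeries (Fin (n + 1)) k}
    (h : ∑ j ∈ Finset.range q, (MvPowerSeries.X 0 : MvPowerSeries (Fin (n + 1)) k) ^ j
        * expandY q (g j) = 0)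
    {j : ℕ} (hj : j < q) : g j = 0 := by
  ext e
  have hD := congrArg (MvPowerSeries.coeff (phi q e + Finsupp.single 0 j)) h
  rw [map_sum, map_zero] at hD
  set D := phi q e + Finsupp.single (0 : Fin (n + 1)) j with hDdef
  have hterm : ∀ i ∈ Finset.range q,
      MvPowerSeries.coeff D ((MvPowerSeries.X 0 : MvPowerSeries (Fin (n + 1)) k) ^ i
          * expandY q (g i)) =
      if Finsupp.single (0 : Fin (n + 1)) i ≤ D
        then MvPowerSeries.coeff ((D - Finsupp.single 0 i : Fin (n + 1) →₀ ℕ)) (expandY q (g i))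
        else 0 := by
    intro i _
    rw [MvPowerSeries.X_pow_eq, MvPowerSeries.coeff_monomial_mul]
    split_ifs <;> simp
  rw [Finset.sum_congr rfl hterm, Finset.sum_eq_single_of_mem j (Finset.mem_range.mpr hj)] at hD
  · rw [if_pos (Finsupp.single_le_iff.mpr (by simp [hDdef, Finsupp.add_apply])),
      hDdef, add_tsub_cancel_right, coeff_expandY_phi hq] at hD
    rw [hD, map_zero]
  · intro i hi hne
    rw [Finset.mem_range] at hi
    by_cases hle : Finsupp.single (0 : Fin (n + 1)) i ≤ D
    · rw [if_pos hle, coeff_expandY_of_not_dvd]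
      intro hdvd
      have hD0 : D 0 = q * e 0 + j := by simp [hDdef, Finsupp.add_apply]
      rw [Finsupp.tsub_apply, Finsupp.single_eq_same, hD0] at hdvd
      have hle0 : i ≤ q * e 0 + j := by
        have := Finsupp.single_le_iff.mp hle
        rwa [hD0] at this
      obtain ⟨c, hc⟩ := hdvd
      have h1 : q * c + i = q * e 0 + j := by omega
      have h2 : (q * c + i) % q = i := by rw [Nat.mul_add_mod, Nat.mod_eq_of_lt hi]
      have h3 : (q * e 0 + j) % q = j := by rw [Nat.mul_add_mod, Nat.mod_eq_of_lt hj]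
      rw [h1, h3] at h2
      exact hne h2.symm
    · rw [if_neg hle]

end Aux6

namespace Aux7
open Aux Aux2 Aux3 Aux4 Aux5 Aux6

variable {n : ℕ}

lemma sum_expVar_eq_zero {q : ℕ} (hq : 0 < q) {t : ℕ → MvPolynomial (Fin (n + 1)) k}
    (h : ∑ j ∈ Finset.range q, MvPolynomial.X 0 ^ j * expVar (k := k) q (t j) = 0)
    {j : ℕ} (hj : j < q) : t j = 0 := by
  have h2 := congrArg (MvPolynomial.coeToMvPowerSeries.ringHom
    (σ := Fin (n + 1)) (R := k)) h
  rw [map_sum, map_zero] at h2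
  simp only [map_mul, map_pow, MvPolynomial.coeToMvPowerSeries.ringHom_apply,
    MvPolynomial.coe_X, coe_expVar hq] at h2
  have h3 := sum_expandY_eq_zero hq h2 hj
  rwa [← MvPolynomial.coe_zero, MvPolynomial.coe_inj] at h3

lemma comp_eq {q : ℕ} (hq : 0 < q) :
    (MvPolynomial.coeToMvPowerSeries.ringHom (σ := Fin (n + 1)) (R := k)).comp
        (expVar (k := k) (n := n) q).toRingHom
      = (E q hq).comp (MvPolynomial.coeToMvPowerSeries.ringHom (σ := Fin (n + 1)) (R := k)) :=
  RingHom.ext fun p => coe_expVar hq p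

lemma pEval_eq_eval₂ (P : Polynomial (MvPolynomial (Fin (n + 1)) k))
    (f : MvPowerSeries (Fin (n + 1)) k) :
    pEval P f = Polynomial.eval₂ MvPolynomial.coeToMvPowerSeries.ringHom f P := by
  rw [pEval, Polynomial.eval_map]

lemma pEval_expand {q : ℕ} (hq : 0 < q) (P : Polynomial (MvPolynomial (Fin (n + 1)) k))
    (f : MvPowerSeries (Fin (n + 1)) k) :
    pEval (P.map (expVar (k := k) q).toRingHom) (expandY q f) = expandY q (pEval P f) := by
  rw [pEval_eq_eval₂, pEval_eq_eval₂, Polynomial.eval₂_map, comp_eq hq]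
  exact (Polynomial.hom_eval₂ P MvPolynomial.coeToMvPowerSeries.ringHom (E q hq) f).symm

def sectPoly {q : ℕ} (hq : 0 < q) (j : ℕ) (Q : Polynomial (MvPolynomial (Fin (n + 1)) k)) :
    Polynomial (MvPolynomial (Fin (n + 1)) k) :=
  ∑ m ∈ Q.support, Polynomial.monomial m (sect hq j (Q.coeff m))

lemma sect_zero {q : ℕ} (hq : 0 < q) (j : ℕ) : sect (k := k) (n := n) hq j 0 = 0 := by
  apply MvPolynomial.ext
  intro d
  rw [coeff_sect hq]
  simp

lemma coeff_sectPoly {q : ℕ} (hq : 0 < q) (j : ℕ)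
    (Q : Polynomial (MvPolynomial (Fin (n + 1)) k)) (m : ℕ) :
    (sectPoly hq j Q).coeff m = sect hq j (Q.coeff m) := by
  rw [sectPoly, Polynomial.finset_sum_coeff]
  simp only [Polynomial.coeff_monomial]
  by_cases hm : m ∈ Q.support
  · rw [Finset.sum_eq_single_of_mem m hm (fun b _ hb => if_neg hb), if_pos rfl]
  · rw [Finset.sum_eq_zero fun b hb => if_neg (fun hbm : b = m => hm (hbm ▸ hb)),
      Polynomial.notMem_support_iff.mp hm, sect_zero]

lemma Q_decomp {q : ℕ} (hq : 0 < q) (Q : Polynomial (MvPolynomial (Fin (n + 1)) k)) :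
    ∑ j ∈ Finset.range q, Polynomial.C (MvPolynomial.X 0) ^ j
        * (sectPoly hq j Q).map (expVar (k := k) q).toRingHom = Q := by
  apply Polynomial.ext
  intro m
  rw [Polynomial.finset_sum_coeff]
  have : ∀ j ∈ Finset.range q,
      (Polynomial.C (MvPolynomial.X (0 : Fin (n + 1))) ^ j
        * (sectPoly hq j Q).map (expVar (k := k) q).toRingHom).coeff m
      = MvPolynomial.X 0 ^ j * expVar (k := k) q (sect hq j (Q.coeff m)) := by
    intro j _
    rw [← Polynomial.C_pow, Polynomial.coeff_C_mul, Polynomial.coeff_map, coeff_sectPoly hq]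
    rfl
  rw [Finset.sum_congr rfl this, sect_decomp hq]

end Aux7

namespace Aux8
open Aux Aux2 Aux3 Aux4 Aux5 Aux6 Aux7

variable {n : ℕ}

lemma pEval_Q_decomp {q : ℕ} (hq : 0 < q) (Q : Polynomial (MvPolynomial (Fin (n + 1)) k))
    (f : MvPowerSeries (Fin (n + 1)) k) :
    pEval Q (expandY q f) = ∑ j ∈ Finset.range q,
      (MvPowerSeries.X 0 : MvPowerSeries (Fin (n + 1)) k) ^ j
        * expandY q (pEval (sectPoly hq j Q) f) := by
  conv_lhs => rw [← Q_decomp hq Q]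
  rw [pEval_eq_eval₂, Polynomial.eval₂_finset_sum]
  apply Finset.sum_congr rfl
  intro j _
  rw [Polynomial.eval₂_mul, Polynomial.eval₂_pow, Polynomial.eval₂_C,
    MvPolynomial.coeToMvPowerSeries.ringHom_apply, MvPolynomial.coe_X,
    ← pEval_eq_eval₂, pEval_expand hq]

lemma main_dvd {q : ℕ} (hq : 0 < q) {P : Polynomial (MvPolynomial (Fin (n + 1)) k)}
    {f : MvPowerSeries (Fin (n + 1)) k} (hP : IsMinPolyOf P f)
    (Q : Polynomial (MvPolynomial (Fin (n + 1)) k)) (hQ : pEval Q (expandY q f) = 0) :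
    P.map (expVar (k := k) q).toRingHom ∣ Q := by
  have h0 := pEval_Q_decomp hq Q f
  rw [hQ] at h0
  conv_rhs => rw [← Q_decomp hq Q]
  apply Finset.dvd_sum
  intro j hj
  apply Dvd.dvd.mul_left
  apply Polynomial.map_dvd
  apply hP.2.2
  exact sum_expandY_eq_zero hq h0.symm (Finset.mem_range.mp hj)

lemma sum_expVar_eq_zero_poly {q : ℕ} (hq : 0 < q)
    {t : ℕ → Polynomial (MvPolynomial (Fin (n + 1)) k)}
    (h : ∑ j ∈ Finset.range q, Polynomial.C (MvPolynomial.X 0) ^ j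
        * (t j).map (expVar (k := k) q).toRingHom = 0)
    {j : ℕ} (hj : j < q) : t j = 0 := by
  apply Polynomial.ext
  intro m
  have h2 := congrArg (fun p : Polynomial (MvPolynomial (Fin (n + 1)) k) => p.coeff m) h
  simp only [Polynomial.finset_sum_coeff, Polynomial.coeff_zero] at h2
  have h3 : ∀ i ∈ Finset.range q,
      (Polynomial.C (MvPolynomial.X (0 : Fin (n + 1))) ^ i
        * (t i).map (expVar (k := k) q).toRingHom).coeff m
      = MvPolynomial.X 0 ^ i * expVar (k := k) q ((t i).coeff m) := by
    intro i _
    rw [← Polynomial.C_pow, Polynomial.coeff_C_mul, Polynomial.coeff_map]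
    rfl
  rw [Finset.sum_congr rfl h3] at h2
  rw [sum_expVar_eq_zero hq h2 hj, Polynomial.coeff_zero]

lemma reflect_dvd {q : ℕ} (hq : 0 < q) (A B : Polynomial (MvPolynomial (Fin (n + 1)) k))
    (hAB : A.map (expVar (k := k) q).toRingHom ∣ B.map (expVar (k := k) q).toRingHom) :
    A ∣ B := by
  obtain ⟨S, hS⟩ := hAB
  set t : ℕ → Polynomial (MvPolynomial (Fin (n + 1)) k) :=
    fun j => A * sectPoly hq j S - if j = 0 then B else 0 with ht
  have hsum : ∑ j ∈ Finset.range q, Polynomial.C (MvPolynomial.X 0) ^ j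
      * (t j).map (expVar (k := k) q).toRingHom = 0 := by
    have hsplit : ∀ j ∈ Finset.range q,
        Polynomial.C (MvPolynomial.X (0 : Fin (n + 1))) ^ j
          * (t j).map (expVar (k := k) q).toRingHom
        = Polynomial.C (MvPolynomial.X (0 : Fin (n + 1))) ^ j
            * ((A.map (expVar (k := k) q).toRingHom)
              * (sectPoly hq j S).map (expVar (k := k) q).toRingHom)
          - Polynomial.C (MvPolynomial.X (0 : Fin (n + 1))) ^ j
            * ((if j = 0 then B else 0).map (expVar (k := k) q).toRingHom) := by
      intro j _
      rw [ht, Polynomial.map_sub, Polynomial.map_mul, mul_sub]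
    rw [Finset.sum_congr rfl hsplit, Finset.sum_sub_distrib]
    have h1 : ∑ j ∈ Finset.range q, Polynomial.C (MvPolynomial.X (0 : Fin (n + 1))) ^ j
        * ((A.map (expVar (k := k) q).toRingHom)
          * (sectPoly hq j S).map (expVar (k := k) q).toRingHom)
        = A.map (expVar (k := k) q).toRingHom * S := by
      conv_rhs => rw [← Q_decomp hq S, Finset.mul_sum]
      apply Finset.sum_congr rfl
      intro j _
      ring
    have h2 : ∑ j ∈ Finset.range q, Polynomial.C (MvPolynomial.X (0 : Fin (n + 1))) ^ j
        * ((if j = 0 then B else 0).map (expVar (k := k) q).toRingHom)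
        = B.map (expVar (k := k) q).toRingHom := by
      rw [Finset.sum_eq_single_of_mem 0 (Finset.mem_range.mpr hq)]
      · rw [if_pos rfl, pow_zero, one_mul]
      · intro j _ hj0
        rw [if_neg hj0, Polynomial.map_zero, mul_zero]
    rw [h1, h2, hS, sub_self]
  have h0 : t 0 = 0 := sum_expVar_eq_zero_poly hq hsum hq
  rw [ht] at h0
  simp only [if_pos rfl] at h0
  exact ⟨sectPoly hq 0 S, (sub_eq_zero.mp h0).symm⟩

end Aux8

namespace Aux9
open Aux Aux2 Aux3 Aux4 Aux5 Aux6 Aux7 Aux8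

variable {n : ℕ}

lemma isMinPolyOf_expand {q : ℕ} (hq : 0 < q) {P : Polynomial (MvPolynomial (Fin (n + 1)) k)}
    {f : MvPowerSeries (Fin (n + 1)) k} (hP : IsMinPolyOf P f) :
    IsMinPolyOf (P.map (expVar (k := k) q).toRingHom) (expandY q f) := by
  refine ⟨(Polynomial.map_ne_zero_iff (expVar_injective hq)).mpr hP.1, ?_, main_dvd hq hP⟩
  rw [pEval_expand hq, hP.2.1, expandY_zero]

lemma isMinPolyOf_of_expand {q : ℕ} (hq : 0 < q) {R : Polynomial (MvPolynomial (Fin (n + 1)) k)}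
    {f : MvPowerSeries (Fin (n + 1)) k}
    (hR : IsMinPolyOf (R.map (expVar (k := k) q).toRingHom) (expandY q f)) :
    IsMinPolyOf R f := by
  refine ⟨fun h => hR.1 (by rw [h, Polynomial.map_zero]), ?_, ?_⟩
  · have h1 := hR.2.1
    rw [pEval_expand hq] at h1
    apply expandY_injective hq
    rw [h1, expandY_zero]
  · intro Q hQ
    have h2 : pEval (Q.map (expVar (k := k) q).toRingHom) (expandY q f) = 0 := by
      rw [pEval_expand hq, hQ, expandY_zero]
    exact reflect_dvd hq R Q (hR.2.2 _ h2)

lemma natDegree_map_expVar {q : ℕ} (hq : 0 < q) (P : Polynomial (MvPolynomial (Fin (n + 1)) k)) :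
    (P.map (expVar (k := k) q).toRingHom).natDegree = P.natDegree :=
  Polynomial.natDegree_map_eq_of_injective (expVar_injective hq) P

lemma heightP_le_map {q : ℕ} (hq : 0 < q) (P : Polynomial (MvPolynomial (Fin (n + 1)) k)) :
    heightP P ≤ heightP (P.map (expVar (k := k) q).toRingHom) := by
  rw [heightP, heightP, natDegree_map_expVar hq]
  apply Finset.sup_le
  intro i hi
  calc (P.coeff i).totalDegree
      ≤ (expVar (k := k) q (P.coeff i)).totalDegree := totalDegree_le_expVar hq _
    _ = ((P.map (expVar (k := k) q).toRingHom).coeff i).totalDegree := by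
        rw [Polynomial.coeff_map]; rfl
    _ ≤ _ := Finset.le_sup
        (f := fun i => ((P.map (expVar (k := k) q).toRingHom).coeff i).totalDegree) hi

lemma heightP_map_le {q : ℕ} (hq : 0 < q) (P : Polynomial (MvPolynomial (Fin (n + 1)) k)) :
    heightP (P.map (expVar (k := k) q).toRingHom) ≤ q * heightP P := by
  rw [heightP, heightP, natDegree_map_expVar hq]
  apply Finset.sup_le
  intro i hi
  calc ((P.map (expVar (k := k) q).toRingHom).coeff i).totalDegree
      = (expVar (k := k) q (P.coeff i)).totalDegree := by rw [Polynomial.coeff_map]; rfl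
    _ ≤ q * (P.coeff i).totalDegree := totalDegree_expVar_le hq _
    _ ≤ q * heightP P := Nat.mul_le_mul_left _ (by
        rw [heightP]
        exact Finset.le_sup (f := fun i => (P.coeff i).totalDegree) hi)

end Aux9

/-- Let `f(x,y)` be an algebraic power series with minimal polynomial
`P(x,y,T)` and `q > 0`.  Then `f(x,y^q)` is algebraic with minimal polynomial
`P(x,y^q,T)`, same degree, and `H(f(x,y)) ≤ H(f(x,y^q)) ≤ q·H(f(x,y))`; moreover for any
`R`, `R(x,y,T)` is a minimal polynomial of `f(x,y)` iff `R(x,y^q,T)` is a minimal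
polynomial of `f(x,y^q)`. -/
theorem expandY_minpoly {n : ℕ} (q : ℕ) (hq : 0 < q)
    (f : MvPowerSeries (Fin (n + 1)) k)
    (P : Polynomial (MvPolynomial (Fin (n + 1)) k)) (hP : IsMinPolyOf P f) :
    IsMinPolyOf (P.map (expVar (k := k) q).toRingHom) (expandY q f) ∧
      (P.map (expVar (k := k) q).toRingHom).natDegree = P.natDegree ∧
      heightP P ≤ heightP (P.map (expVar (k := k) q).toRingHom) ∧
      heightP (P.map (expVar (k := k) q).toRingHom) ≤ q * heightP P ∧
      ∀ R : Polynomial (MvPolynomial (Fin (n + 1)) k),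
        IsMinPolyOf R f ↔ IsMinPolyOf (R.map (expVar (k := k) q).toRingHom) (expandY q f) :=
  ⟨Aux9.isMinPolyOf_expand hq hP, Aux9.natDegree_map_expVar hq P,
    Aux9.heightP_le_map hq P, Aux9.heightP_map_le hq P,
    fun R => ⟨fun hR => Aux9.isMinPolyOf_expand hq hR, fun hR => Aux9.isMinPolyOf_of_expand hq hR⟩⟩
end
end

section
/- (Localized ideal membership at a multiplicative set.) Let k be an infinite field, M a submodule of k[x₁,…,xₙ]^q generated by f₁,…,f_p, and S a multiplicatively closed subset of k[x]. Then there is a constant C > 0 depending only on M and S such that: for any f ∈ k[x]^q, f ∈ S^{−1}M if and only if there exist polynomials a₁,…,a_p of degree ≤ deg(f) + C and u ∈ S of degree ≤ C with u·f = a₁f₁ + ⋯ + a_p f_p. -/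
set_option linter.unusedSectionVars false

open MvPolynomial Finset

namespace LocMemAux

variable {k : Type*} [CommRing k]

/-- Convolution formula for homogeneous components of a product. -/
lemma hc_mul {σ : Type*} (a b : MvPolynomial σ k) (m : ℕ) :
    homogeneousComponent m (a * b)
      = ∑ ij ∈ Finset.HasAntidiagonal.antidiagonal m,
          homogeneousComponent ij.1 a * homogeneousComponent ij.2 b := by
  classical
  ext d
  rw [coeff_homogeneousComponent, MvPolynomial.coeff_sum]
  simp_rw [MvPolynomial.coeff_mul, coeff_homogeneousComponent]
  rw [Finset.sum_comm]
  have key : ∀ uv ∈ Finset.HasAntidiagonal.antidiagonal d,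
      (∑ ij ∈ Finset.HasAntidiagonal.antidiagonal m,
        (if (uv : (σ →₀ ℕ) × (σ →₀ ℕ)).1.degree = ij.1 then coeff uv.1 a else 0) *
          (if uv.2.degree = ij.2 then coeff uv.2 b else 0))
      = if d.degree = m then coeff uv.1 a * coeff uv.2 b else 0 := by
    intro uv huv
    have hdeg : uv.1.degree + uv.2.degree = d.degree := by
      rw [Finset.HasAntidiagonal.mem_antidiagonal] at huv
      rw [← huv]
      simp [Finsupp.degree_eq_weight_one, map_add]
    have step1 : (∑ ij ∈ Finset.HasAntidiagonal.antidiagonal m,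
        (if (uv : (σ →₀ ℕ) × (σ →₀ ℕ)).1.degree = ij.1 then coeff uv.1 a else 0) *
          (if uv.2.degree = ij.2 then coeff uv.2 b else 0))
        = ∑ ij ∈ Finset.HasAntidiagonal.antidiagonal m,
            if ij = (uv.1.degree, uv.2.degree) then coeff uv.1 a * coeff uv.2 b else 0 := by
      refine Finset.sum_congr rfl fun ij _ => ?_
      by_cases h1 : uv.1.degree = ij.1
      · by_cases h2 : uv.2.degree = ij.2
        · rw [if_pos h1, if_pos h2, if_pos (Prod.ext h1.symm h2.symm)]
        · rw [if_neg h2, mul_zero, if_neg (fun hh => h2 (by rw [hh]))]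
      · rw [if_neg h1, zero_mul, if_neg (fun hh => h1 (by rw [hh]))]
    rw [step1, Finset.sum_ite_eq' (Finset.HasAntidiagonal.antidiagonal m) ((uv.1.degree, uv.2.degree) : ℕ × ℕ)
      (fun _ => coeff uv.1 a * coeff uv.2 b)]
    simp only [Finset.HasAntidiagonal.mem_antidiagonal, hdeg]
  rw [Finset.sum_congr rfl key]
  by_cases h : d.degree = m
  · simp [h, MvPolynomial.coeff_mul]
  · simp [h]

end LocMemAux

namespace LocMemAux
open MvPolynomial Finset
variable {k : Type*} [CommRing k]

/-- Extracting a homogeneous component from a product with a homogeneous factor. -/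
lemma hc_mul_right {σ : Type*} (a b : MvPolynomial σ k) {e : ℕ} (m : ℕ)
    (hb : b.IsHomogeneous e) :
    homogeneousComponent m (a * b)
      = if e ≤ m then homogeneousComponent (m - e) a * b else 0 := by
  classical
  rw [hc_mul]
  have hcb : ∀ j : ℕ, homogeneousComponent j b = if j = e then b else 0 := fun j =>
    homogeneousComponent_of_mem ((mem_homogeneousSubmodule _ _).mpr hb)
  have step1 : ∀ ij ∈ Finset.HasAntidiagonal.antidiagonal m,
      homogeneousComponent ij.1 a * homogeneousComponent ij.2 b
        = if ij = (m - e, e) ∧ e ≤ m then homogeneousComponent (m - e) a * b else 0 := by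
    intro ij hij
    rw [Finset.HasAntidiagonal.mem_antidiagonal] at hij
    rw [hcb]
    by_cases h2 : ij.2 = e
    · have hle : e ≤ m := h2 ▸ hij ▸ Nat.le_add_left _ _
      have h1 : ij.1 = m - e := by omega
      rw [if_pos h2, if_pos ⟨Prod.ext h1 h2, hle⟩, h1]
    · rw [if_neg h2, mul_zero, if_neg (fun hh => h2 (by rw [hh.1]))]
  rw [Finset.sum_congr rfl step1]
  by_cases hle : e ≤ m
  · rw [Finset.sum_eq_single ((m - e, e) : ℕ × ℕ)]
    · rw [if_pos ⟨rfl, hle⟩, if_pos hle]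
    · intro ij _ hne
      rw [if_neg (fun hh => hne hh.1)]
    · intro hmem
      exact absurd (Finset.HasAntidiagonal.mem_antidiagonal.mpr (by omega)) hmem
  · rw [Finset.sum_eq_zero]
    · rw [if_neg hle]
    · intro ij _
      rw [if_neg (fun hh => hle hh.2)]

variable {n : ℕ}

/-- Homogenization of `g` to degree `D`, as a polynomial in one more variable. -/
noncomputable def hgz (D : ℕ) (g : MvPolynomial (Fin n) k) : MvPolynomial (Fin (n + 1)) k :=
  ∑ i ∈ Finset.range (D + 1), X 0 ^ (D - i) * rename Fin.succ (homogeneousComponent i g)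

lemma hgz_isHomogeneous (D : ℕ) (g : MvPolynomial (Fin n) k) :
    (hgz D g).IsHomogeneous D := by
  apply MvPolynomial.IsHomogeneous.sum
  intro i hi
  rw [Finset.mem_range] at hi
  have h1 : (X (0 : Fin (n + 1)) ^ (D - i) : MvPolynomial (Fin (n + 1)) k).IsHomogeneous
      (1 * (D - i)) := (isHomogeneous_X k 0).pow _
  have h2 : (rename Fin.succ (homogeneousComponent i g)).IsHomogeneous i :=
    (homogeneousComponent_isHomogeneous i g).rename_isHomogeneous
  have := h1.mul h2
  rwa [one_mul, Nat.sub_add_cancel (by omega)] at this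

lemma hgz_add (D : ℕ) (g g' : MvPolynomial (Fin n) k) :
    hgz D (g + g') = hgz D g + hgz D g' := by
  unfold hgz
  rw [← Finset.sum_add_distrib]
  refine Finset.sum_congr rfl fun i _ => ?_
  rw [map_add, map_add, mul_add]

lemma hgz_sum {ι : Type*} (D : ℕ) (s : Finset ι) (t : ι → MvPolynomial (Fin n) k) :
    hgz D (∑ i ∈ s, t i) = ∑ i ∈ s, hgz D (t i) := by
  unfold hgz
  simp_rw [map_sum, Finset.mul_sum]
  exact Finset.sum_comm

lemma hgz_shift {D : ℕ} {g : MvPolynomial (Fin n) k} (hg : g.totalDegree ≤ D) (s : ℕ) :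
    X 0 ^ s * hgz D g = hgz (D + s) g := by
  have h1 : hgz (D + s) g = ∑ i ∈ Finset.range (D + 1),
      X 0 ^ (D + s - i) * rename Fin.succ (homogeneousComponent i g) := by
    rw [hgz]
    rw [← Finset.sum_subset (Finset.range_subset_range.mpr (by omega : D + 1 ≤ D + s + 1))]
    intro i hi hni
    rw [Finset.mem_range] at hi hni
    rw [homogeneousComponent_eq_zero _ _ (by omega), map_zero, mul_zero]
  rw [h1, hgz, Finset.mul_sum]
  refine Finset.sum_congr rfl fun i hi => ?_
  rw [Finset.mem_range] at hi
  rw [← mul_assoc, ← pow_add]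
  congr 2
  omega

lemma hgz_mul {Da Db : ℕ} {a b : MvPolynomial (Fin n) k}
    (ha : a.totalDegree ≤ Da) (hb : b.totalDegree ≤ Db) :
    hgz (Da + Db) (a * b) = hgz Da a * hgz Db b := by
  classical
  set N := Da + Db with hN
  set G : ℕ × ℕ → MvPolynomial (Fin (n + 1)) k := fun ij =>
    X 0 ^ (N - ij.1 - ij.2) *
      (rename Fin.succ (homogeneousComponent ij.1 a) *
        rename Fin.succ (homogeneousComponent ij.2 b)) with hG
  have hGa : ∀ ij : ℕ × ℕ, Da < ij.1 → G ij = 0 := by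
    intro ij h
    rw [hG]
    dsimp only
    rw [homogeneousComponent_eq_zero _ _ (lt_of_le_of_lt ha h), map_zero, zero_mul, mul_zero]
  have hGb : ∀ ij : ℕ × ℕ, Db < ij.2 → G ij = 0 := by
    intro ij h
    rw [hG]
    dsimp only
    rw [homogeneousComponent_eq_zero _ _ (lt_of_le_of_lt hb h), map_zero, mul_zero, mul_zero]
  have hdisj : Set.PairwiseDisjoint ↑(Finset.range (N + 1))
      (fun m => (Finset.HasAntidiagonal.antidiagonal m : Finset (ℕ × ℕ))) := by
    intro m1 _ m2 _ hne
    apply Finset.disjoint_left.mpr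
    intro pp hp1 hp2
    rw [Finset.HasAntidiagonal.mem_antidiagonal] at hp1 hp2
    exact hne (by omega)
  have lhs : hgz N (a * b)
      = ∑ ij ∈ (Finset.range (N + 1)).biUnion (fun m => Finset.HasAntidiagonal.antidiagonal m), G ij := by
    rw [hgz, Finset.sum_biUnion hdisj]
    refine Finset.sum_congr rfl fun m hm => ?_
    rw [hc_mul, map_sum, Finset.mul_sum]
    refine Finset.sum_congr rfl fun ij hij => ?_
    rw [Finset.HasAntidiagonal.mem_antidiagonal] at hij
    rw [hG]
    dsimp only
    rw [map_mul]
    congr 2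
    omega
  have rhs : hgz Da a * hgz Db b
      = ∑ ij ∈ Finset.range (Da + 1) ×ˢ Finset.range (Db + 1), G ij := by
    rw [hgz, hgz, Finset.sum_mul_sum, Finset.sum_product]
    refine Finset.sum_congr rfl fun i hi => Finset.sum_congr rfl fun j hj => ?_
    rw [Finset.mem_range] at hi
    rw [Finset.mem_range] at hj
    rw [hG]
    dsimp only
    rw [mul_mul_mul_comm, ← pow_add]
    congr 2
    omega
  rw [lhs, rhs]
  have h1 : (Finset.range (N + 1)).biUnion (fun m => Finset.HasAntidiagonal.antidiagonal m)
      ⊆ Finset.range (N + 1) ×ˢ Finset.range (N + 1) := by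
    intro pp hp
    rw [Finset.mem_biUnion] at hp
    obtain ⟨m, hm, hpm⟩ := hp
    rw [Finset.mem_range] at hm
    rw [Finset.HasAntidiagonal.mem_antidiagonal] at hpm
    rw [Finset.mem_product, Finset.mem_range, Finset.mem_range]
    omega
  have h2 : Finset.range (Da + 1) ×ˢ Finset.range (Db + 1)
      ⊆ Finset.range (N + 1) ×ˢ Finset.range (N + 1) := by
    intro pp hp
    rw [Finset.mem_product, Finset.mem_range, Finset.mem_range] at hp
    rw [Finset.mem_product, Finset.mem_range, Finset.mem_range]
    omega
  rw [Finset.sum_subset h1, Finset.sum_subset h2]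
  · intro pp hp hnp
    rw [Finset.mem_product, Finset.mem_range, Finset.mem_range] at hp
    rcases (by omega : Da < pp.1 ∨ Db < pp.2 ∨ (pp.1 ≤ Da ∧ pp.2 ≤ Db)) with h | h | h
    · exact hGa pp h
    · exact hGb pp h
    · exact absurd (Finset.mem_product.mpr ⟨Finset.mem_range.mpr (by omega),
        Finset.mem_range.mpr (by omega)⟩) hnp
  · intro pp hp hnp
    rw [Finset.mem_product, Finset.mem_range, Finset.mem_range] at hp
    have : ¬ pp.1 + pp.2 ≤ N := by
      intro hle
      exact hnp (Finset.mem_biUnion.mpr ⟨pp.1 + pp.2, Finset.mem_range.mpr (by omega),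
        Finset.HasAntidiagonal.mem_antidiagonal.mpr rfl⟩)
    rcases (by omega : Da < pp.1 ∨ Db < pp.2) with h | h
    · exact hGa pp h
    · exact hGb pp h

end LocMemAux

namespace LocMemAux
open MvPolynomial Finset
variable {k : Type*} [CommRing k] [Nontrivial k] {n : ℕ}

/-- The dehomogenization map, sending the extra variable to `1`. -/
noncomputable def down : MvPolynomial (Fin (n + 1)) k →ₐ[k] MvPolynomial (Fin n) k :=
  aeval (Fin.cases 1 X)

lemma down_rename (g : MvPolynomial (Fin n) k) : down (rename Fin.succ g) = g := by
  rw [down, aeval_rename]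
  have : ((Fin.cases 1 X : Fin (n + 1) → MvPolynomial (Fin n) k) ∘ Fin.succ) = X := by
    funext i
    simp
  rw [this, aeval_X_left_apply]

lemma sum_hc {D : ℕ} {g : MvPolynomial (Fin n) k} (hg : g.totalDegree ≤ D) :
    ∑ i ∈ Finset.range (D + 1), homogeneousComponent i g = g := by
  conv_rhs => rw [← sum_homogeneousComponent g]
  refine (Finset.sum_subset (Finset.range_subset_range.mpr
    (by omega : g.totalDegree + 1 ≤ D + 1)) ?_).symm
  intro i hi hni
  rw [Finset.mem_range] at hi hni
  exact homogeneousComponent_eq_zero _ _ (by omega)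

lemma down_X_zero_pow (s : ℕ) : down ((X 0 : MvPolynomial (Fin (n + 1)) k) ^ s) = 1 := by
  rw [map_pow, down, aeval_X]
  simp

lemma down_hgz {D : ℕ} {g : MvPolynomial (Fin n) k} (hg : g.totalDegree ≤ D) :
    down (hgz D g) = g := by
  rw [hgz, map_sum]
  have : ∀ i ∈ Finset.range (D + 1),
      down (X 0 ^ (D - i) * rename Fin.succ (homogeneousComponent i g))
        = homogeneousComponent i g := by
    intro i _
    rw [map_mul, down_X_zero_pow, one_mul, down_rename]
  rw [Finset.sum_congr rfl this, sum_hc hg]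

lemma totalDegree_down_le {e : ℕ} {h : MvPolynomial (Fin (n + 1)) k}
    (hh : h.IsHomogeneous e) : (down h).totalDegree ≤ e := by
  conv_lhs => rw [h.as_sum]
  rw [map_sum]
  refine le_trans (totalDegree_finset_sum _ _) (Finset.sup_le fun v hv => ?_)
  have hdeg : v.degree = e := by
    by_contra hne
    exact (mem_support_iff.mp hv) (hh.coeff_eq_zero hne)
  rw [down, aeval_monomial]
  refine le_trans (totalDegree_mul _ _) ?_
  have h1 : (algebraMap k (MvPolynomial (Fin n) k) (coeff v h)).totalDegree = 0 :=
    totalDegree_C _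
  rw [h1, zero_add]
  rw [Finsupp.prod]
  refine le_trans (totalDegree_finset_prod _ _) ?_
  have h2 : ∀ i ∈ v.support,
      ((Fin.cases 1 X : Fin (n + 1) → MvPolynomial (Fin n) k) i ^ v i).totalDegree ≤ v i := by
    intro i _
    refine le_trans (totalDegree_pow _ _) ?_
    have : ((Fin.cases 1 X : Fin (n + 1) → MvPolynomial (Fin n) k) i).totalDegree ≤ 1 := by
      induction i using Fin.cases with
      | zero => simp
      | succ j => simp [totalDegree_X]
    calc v i * ((Fin.cases 1 X : Fin (n + 1) → MvPolynomial (Fin n) k) i).totalDegree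
        ≤ v i * 1 := Nat.mul_le_mul_left _ this
      _ = v i := Nat.mul_one _
  refine le_trans (Finset.sum_le_sum h2) ?_
  rw [← hdeg, Finsupp.degree]
  exact le_rfl

end LocMemAux

namespace LocMemAux
open MvPolynomial Finset

lemma stabilize {R : Type*} [CommRing R] {M : Type*} [AddCommGroup M] [Module R M]
    [IsNoetherian R M] (x : R) (Mh : Submodule R M) :
    ∃ N₀ : ℕ, ∀ g : M, (∃ N, x ^ N • g ∈ Mh) → x ^ N₀ • g ∈ Mh := by
  have hmono : Monotone (fun N => Mh.comap (LinearMap.lsmul R M (x ^ N))) := by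
    apply monotone_nat_of_le_succ
    intro N g hg
    have : x ^ (N + 1) • g = x • x ^ N • g := by
      rw [← mul_smul, ← pow_succ']
    simp only [Submodule.mem_comap, LinearMap.lsmul_apply] at hg ⊢
    rw [this]
    exact Mh.smul_mem _ hg
  obtain ⟨N₀, hN₀⟩ := monotone_stabilizes_iff_noetherian.mpr inferInstance
    ⟨fun N => Mh.comap (LinearMap.lsmul R M (x ^ N)), hmono⟩
  refine ⟨N₀, fun g hg => ?_⟩
  obtain ⟨N, hN⟩ := hg
  have h1 : g ∈ Mh.comap (LinearMap.lsmul R M (x ^ (max N N₀))) :=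
    hmono (le_max_left N N₀) hN
  have h2 := hN₀ (max N N₀) (le_max_right N N₀)
  simp only [OrderHom.coe_mk] at h2
  rw [← h2] at h1
  exact h1

variable {k : Type*} [Field k] {n : ℕ}

/-- Effective (linear) bound for membership in a finitely generated submodule of `k[x]^q`. -/
lemma membership_bound (q p : ℕ) (fi : Fin p → Fin q → MvPolynomial (Fin n) k) :
    ∃ C : ℕ, ∀ f : Fin q → MvPolynomial (Fin n) k,
      f ∈ Submodule.span (MvPolynomial (Fin n) k) (Set.range fi) →
      ∃ a : Fin p → MvPolynomial (Fin n) k,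
        (∀ i, (a i).totalDegree ≤ (Finset.univ.sup fun j => (f j).totalDegree) + C) ∧
        f = ∑ i, a i • fi i := by
  classical
  set R' := MvPolynomial (Fin (n + 1)) k with hR'
  set d : Fin p → ℕ := fun i => Finset.univ.sup fun j => (fi i j).totalDegree with hd
  set fih : Fin p → (Fin q → R') := fun i j => hgz (d i) (fi i j) with hfih
  set Mh : Submodule R' (Fin q → R') := Submodule.span R' (Set.range fih) with hMh
  obtain ⟨N₀, hN₀⟩ := stabilize (X 0 : R') Mh
  refine ⟨N₀, fun f hf => ?_⟩
  set df := Finset.univ.sup fun j => (f j).totalDegree with hdf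
  obtain ⟨b, hb⟩ := Submodule.mem_span_range_iff_exists_fun _ |>.mp hf
  set E := Finset.univ.sup fun i => (b i).totalDegree with hE
  set D := Finset.univ.sup d with hD
  have hdb : ∀ i, (b i).totalDegree ≤ E := fun i =>
    Finset.le_sup (f := fun i => (b i).totalDegree) (Finset.mem_univ i)
  have hdfi : ∀ i j, (fi i j).totalDegree ≤ d i := fun i j =>
    Finset.le_sup (f := fun j => (fi i j).totalDegree) (Finset.mem_univ j)
  have hdD : ∀ i, d i ≤ D := fun i => Finset.le_sup (f := d) (Finset.mem_univ i)
  have hfj : ∀ j, f j = ∑ i, b i * fi i j := by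
    intro j
    rw [← hb]
    simp [Finset.sum_apply]
  have hdfdf : ∀ j, (f j).totalDegree ≤ df := fun j =>
    Finset.le_sup (f := fun j => (f j).totalDegree) (Finset.mem_univ j)
  have hdfED : df ≤ E + D := by
    refine Finset.sup_le fun j _ => ?_
    rw [hfj j]
    refine le_trans (totalDegree_finset_sum _ _) (Finset.sup_le fun i _ => ?_)
    exact le_trans (totalDegree_mul _ _) (add_le_add (hdb i) (le_trans (hdfi i j) (hdD i)))
  have key : ∀ j, hgz (E + D) (f j) = ∑ i, (X 0 ^ (D - d i) * hgz E (b i)) * fih i j := by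
    intro j
    rw [hfj j, hgz_sum]
    refine Finset.sum_congr rfl fun i _ => ?_
    have h1 : hgz (E + d i) (b i * fi i j) = hgz E (b i) * hgz (d i) (fi i j) :=
      hgz_mul (hdb i) (hdfi i j)
    have h2 : X 0 ^ (D - d i) * hgz (E + d i) (b i * fi i j) = hgz (E + D) (b i * fi i j) := by
      rw [hgz_shift (le_trans (totalDegree_mul _ _) (add_le_add (hdb i) (hdfi i j))) _]
      congr 1
      have := hdD i
      omega
    rw [← h2, h1, hfih]
    ring
  have hmem : (fun j => hgz (E + D) (f j)) ∈ Mh := by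
    have heq : (fun j => hgz (E + D) (f j)) = ∑ i, (X 0 ^ (D - d i) * hgz E (b i)) • fih i := by
      funext j
      rw [key j]
      simp [Finset.sum_apply]
    rw [heq]
    exact Submodule.sum_mem _ fun i _ => Submodule.smul_mem _ _
      (Submodule.subset_span ⟨i, rfl⟩)
  have hsat' : (fun j => hgz (df + N₀) (f j)) ∈ Mh := by
    have h3 : (X 0 : R') ^ N₀ • (fun j => hgz df (f j)) ∈ Mh := by
      apply hN₀
      refine ⟨E + D - df, ?_⟩
      have heq : (X 0 : R') ^ (E + D - df) • (fun j => hgz df (f j))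
          = fun j => hgz (E + D) (f j) := by
        funext j
        rw [Pi.smul_apply, smul_eq_mul, hgz_shift (hdfdf j)]
        congr 1
        omega
      rw [heq]
      exact hmem
    have heq : (fun j => hgz (df + N₀) (f j)) = (X 0 : R') ^ N₀ • (fun j => hgz df (f j)) := by
      funext j
      rw [Pi.smul_apply, smul_eq_mul, hgz_shift (hdfdf j)]
    rw [heq]
    exact h3
  obtain ⟨A, hA⟩ := Submodule.mem_span_range_iff_exists_fun _ |>.mp hsat'
  set D' := df + N₀ with hD'
  set A' : Fin p → R' := fun i => if d i ≤ D' then homogeneousComponent (D' - d i) (A i) else 0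
    with hA'
  have hAj : ∀ j, hgz D' (f j) = ∑ i, A' i * fih i j := by
    intro j
    have h0 : hgz D' (f j) = homogeneousComponent D' (hgz D' (f j)) := by
      rw [homogeneousComponent_of_mem
        ((mem_homogeneousSubmodule _ _).mpr (hgz_isHomogeneous _ _)), if_pos rfl]
    have h1 : hgz D' (f j) = ∑ i, A i * fih i j := by
      have h2 := congrFun hA j
      simp only [Finset.sum_apply, Pi.smul_apply, smul_eq_mul] at h2
      exact h2.symm
    conv_lhs => rw [h0, h1]
    rw [map_sum]
    refine Finset.sum_congr rfl fun i _ => ?_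
    have hfihhom : (fih i j).IsHomogeneous (d i) := by
      rw [hfih]
      exact hgz_isHomogeneous _ _
    rw [hc_mul_right _ _ _ hfihhom, hA']
    dsimp only
    split_ifs with h
    · rfl
    · rw [zero_mul]
  refine ⟨fun i => down (A' i), ?_, ?_⟩
  · intro i
    have hhom : (A' i).IsHomogeneous (D' - d i) := by
      rw [hA']
      dsimp only
      split_ifs
      · exact homogeneousComponent_isHomogeneous _ _
      · exact isHomogeneous_zero _ _ _
    exact le_trans (totalDegree_down_le hhom) (by omega)
  · funext j
    have h4 := congrArg down (hAj j)
    rw [down_hgz (le_trans (hdfdf j) (by omega : df ≤ D')), map_sum] at h4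
    rw [h4]
    simp only [Finset.sum_apply, Pi.smul_apply, smul_eq_mul]
    refine Finset.sum_congr rfl fun i _ => ?_
    have : down (fih i j) = fi i j := by
      rw [hfih]
      exact down_hgz (hdfi i j)
    rw [map_mul, this]

end LocMemAux

namespace LocMemAux
open MvPolynomial Finset

variable {k : Type*} [Field k] {n : ℕ}

/-- A single `u ∈ S` clears denominators uniformly. -/
lemma exists_uniform_u (q : ℕ) (S : Submonoid (MvPolynomial (Fin n) k))
    (M : Submodule (MvPolynomial (Fin n) k) (Fin q → MvPolynomial (Fin n) k)) :
    ∃ u ∈ S, ∀ f : Fin q → MvPolynomial (Fin n) k,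
      (∃ v ∈ S, v • f ∈ M) → u • f ∈ M := by
  classical
  set R := MvPolynomial (Fin n) k with hR
  set N : Submodule R (Fin q → R) :=
    { carrier := {f | ∃ v ∈ S, v • f ∈ M}
      add_mem' := by
        rintro f g ⟨v, hvS, hvM⟩ ⟨w, hwS, hwM⟩
        refine ⟨v * w, S.mul_mem hvS hwS, ?_⟩
        rw [smul_add]
        have h1 : (v * w) • f = w • (v • f) := by rw [mul_comm, mul_smul]
        have h2 : (v * w) • g = v • (w • g) := by rw [mul_smul]
        rw [h1, h2]
        exact M.add_mem (M.smul_mem _ hvM) (M.smul_mem _ hwM)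
      zero_mem' := ⟨1, S.one_mem, by rw [smul_zero]; exact M.zero_mem⟩
      smul_mem' := by
        rintro c f ⟨v, hvS, hvM⟩
        refine ⟨v, hvS, ?_⟩
        have : v • (c • f) = c • (v • f) := smul_comm _ _ _
        rw [this]
        exact M.smul_mem _ hvM } with hN
  obtain ⟨T, hT⟩ := IsNoetherian.noetherian N
  have hTmem : ∀ t ∈ T, ∃ v ∈ S, v • t ∈ M := by
    intro t ht
    have : t ∈ N := hT ▸ Submodule.subset_span ht
    exact this
  choose! v hvS hvM using hTmem
  refine ⟨∏ t ∈ T, v t, Submonoid.prod_mem S (fun t ht => hvS t ht), ?_⟩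
  intro f hf
  have hfN : f ∈ N := hf
  rw [← hT] at hfN
  have hle : Submodule.span R (↑T : Set (Fin q → R))
      ≤ M.comap (LinearMap.lsmul R (Fin q → R) (∏ t ∈ T, v t)) := by
    rw [Submodule.span_le]
    intro t ht
    simp only [SetLike.mem_coe, Submodule.mem_comap, LinearMap.lsmul_apply]
    have hprod : (∏ s ∈ T, v s) = v t * ∏ s ∈ T.erase t, v s :=
      (Finset.mul_prod_erase T v ht).symm
    rw [hprod, mul_comm, mul_smul]
    exact M.smul_mem _ (hvM t ht)
  exact hle hfN

end LocMemAux


/-- **localized ideal membership at a multiplicative set.** Let `k` be an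
infinite field, `M ⊆ k[x₁,…,xₙ]^q` a submodule generated by `f₁,…,f_p`, and `S` a
multiplicatively closed subset of `k[x]`.  There is a constant `C > 0` (depending only on
`M` and `S`) such that for every `f ∈ k[x]^q`: `f ∈ S⁻¹M` (i.e. `u • f ∈ M` for some
`u ∈ S`) if and only if `u·f = ∑ aᵢ·fᵢ` for some polynomials `aᵢ` of degree
`≤ deg f + C` and some `u ∈ S` of degree `≤ C`. -/
theorem localized_ideal_membership_bound (k : Type*) [Field k] [Infinite k]
    (n q p : ℕ) (fi : Fin p → (Fin q → MvPolynomial (Fin n) k))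
    (S : Submonoid (MvPolynomial (Fin n) k)) :
    ∃ C : ℕ, 0 < C ∧
      ∀ f : Fin q → MvPolynomial (Fin n) k,
        ((∃ u ∈ S, u • f ∈ Submodule.span (MvPolynomial (Fin n) k) (Set.range fi)) ↔
          (∃ (a : Fin p → MvPolynomial (Fin n) k) (u : MvPolynomial (Fin n) k),
            u ∈ S ∧ u.totalDegree ≤ C ∧
            (∀ i, (a i).totalDegree ≤
              (Finset.univ.sup fun j => (f j).totalDegree) + C) ∧
            u • f = ∑ i, a i • fi i)) := by
  classical
  obtain ⟨C₂, hC₂⟩ := LocMemAux.membership_bound q p fi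
  obtain ⟨u₀, hu₀S, hu₀⟩ := LocMemAux.exists_uniform_u q S
    (Submodule.span (MvPolynomial (Fin n) k) (Set.range fi))
  refine ⟨C₂ + u₀.totalDegree + 1, by omega, fun f => ?_⟩
  constructor
  · rintro ⟨u, huS, huM⟩
    have hu₀M : u₀ • f ∈ Submodule.span (MvPolynomial (Fin n) k) (Set.range fi) :=
      hu₀ f ⟨u, huS, huM⟩
    obtain ⟨a, hadeg, haeq⟩ := hC₂ (u₀ • f) hu₀M
    refine ⟨a, u₀, hu₀S, by omega, ?_, haeq⟩
    intro i
    have hsup : (Finset.univ.sup fun j => ((u₀ • f) j).totalDegree)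
        ≤ u₀.totalDegree + Finset.univ.sup fun j => (f j).totalDegree := by
      refine Finset.sup_le fun j _ => ?_
      have : (u₀ • f) j = u₀ * f j := rfl
      rw [this]
      exact le_trans (MvPolynomial.totalDegree_mul _ _)
        (add_le_add le_rfl (Finset.le_sup (f := fun j => (f j).totalDegree)
          (Finset.mem_univ j)))
    exact le_trans (hadeg i) (by omega)
  · rintro ⟨a, u, huS, -, -, heq⟩
    refine ⟨u, huS, ?_⟩
    rw [heq]
    exact Submodule.sum_mem _ fun i _ => Submodule.smul_mem _ _
      (Submodule.subset_span ⟨i, rfl⟩)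
end
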